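/- arXiv:1505.04093 — 3 statements merged into one kernel-verified Lean document; each statement's English description precedes it below -/
import Mathlib

section
/- Fix i ∈ {1,…,2m} and j ∈ {1,…,n}, suppose g↑ ∩ T_ij ≠ ∅ and let r* be the constant value of r↑ on g↑ ∩ T_ij. (a) If g↑ ∩ R_ij = ∅, then r↑(u,v) = r* for all (u,v) ∈ g↑ ∩ LB_ij. (b) If g↑ ∩ R_ij = {i}×[a,b] is nonempty, then for every (i−1,v) ∈ g↑ ∩ L_ij: r↑(i−1,v) = r* if v > b; r↑(i−1,v) = r↑(i,v) if a < v ≤ b; r↑(i−1,v) = r↑(i,a) if v ≤ a; and r↑(u,j−1) = r↑(i,a) for every (u,j−1) ∈ g↑ ∩ B_ij. -/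
open Set

noncomputable section

/-- The piecewise linear closed curve through the vertices `x 0, x 1, …`:
`f(i+α) = (1-α) • x i + α • x (i+1)`. -/
def fCurve {k : ℕ} (x : ℕ → EuclideanSpace ℝ (Fin k)) (t : ℝ) :
    EuclideanSpace ℝ (Fin k) :=
  (1 - Int.fract t) • x (⌊t⌋.toNat) + Int.fract t • x (⌊t⌋.toNat + 1)

/-- The extension of the curve from `[0,m]` to `[0,2m]` by `f(u) = f(u-m)` for `u > m`. -/
def fCurveExt {k : ℕ} (m : ℕ) (x : ℕ → EuclideanSpace ℝ (Fin k)) (u : ℝ) :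
    EuclideanSpace ℝ (Fin k) :=
  if u ≤ m then fCurve x u else fCurve x (u - m)

/-- The rectangle `D = [0,2m] × [0,n]`. -/
def Dfull (m n : ℕ) : Set (ℝ × ℝ) :=
  Icc (0:ℝ) (2*(m:ℝ)) ×ˢ Icc (0:ℝ) (n:ℝ)

/-- The free space `D_ε = {(u,v) ∈ D : dist (f_X u) (f_Y v) ≤ ε}`. -/
def Dfree {k : ℕ} (m n : ℕ) (x y : ℕ → EuclideanSpace ℝ (Fin k)) (ε : ℝ) :
    Set (ℝ × ℝ) :=
  {p ∈ Dfull m n | dist (fCurveExt m x p.1) (fCurve y p.2) ≤ ε}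

/-- The top side `T = [0,2m] × {n}` of `D`. -/
def Tside (m n : ℕ) : Set (ℝ × ℝ) := Icc (0:ℝ) (2*(m:ℝ)) ×ˢ {(n:ℝ)}

/-- The bottom side `B = [0,2m] × {0}` of `D`. -/
def Bside (m : ℕ) : Set (ℝ × ℝ) := Icc (0:ℝ) (2*(m:ℝ)) ×ˢ {(0:ℝ)}

/-- A monotone (non-decreasing) path: a connected subset `γ ⊆ Dε` with
`(u-u')·(v-v') ≥ 0` for all `(u,v), (u',v') ∈ γ`. -/
def IsMonPath (Dε γ : Set (ℝ × ℝ)) : Prop :=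
  γ ⊆ Dε ∧ IsConnected γ ∧
    ∀ p ∈ γ, ∀ q ∈ γ, (p.1 - q.1) * (p.2 - q.2) ≥ 0

/-- Two points are mutually reachable if some monotone path contains both. -/
def Reach (Dε : Set (ℝ × ℝ)) (p q : ℝ × ℝ) : Prop :=
  ∃ γ : Set (ℝ × ℝ), IsMonPath Dε γ ∧ p ∈ γ ∧ q ∈ γ

/-- `g↓`: the points of `Dε` mutually reachable with at least one point of `B`. -/
def gDown (m : ℕ) (Dε : Set (ℝ × ℝ)) : Set (ℝ × ℝ) :=
  {p ∈ Dε | ∃ q ∈ Bside m, Reach Dε p q}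

/-- `g↑`: the points of `Dε` mutually reachable with at least one point of `T`. -/
def gUp (m n : ℕ) (Dε : Set (ℝ × ℝ)) : Set (ℝ × ℝ) :=
  {p ∈ Dε | ∃ q ∈ Tside m n, Reach Dε p q}

/-- The pointer `r↑(p)`: the maximum `u* ∈ [0,2m]` such that `p` and `(u*, n)`
are mutually reachable. -/
def rUp (m n : ℕ) (Dε : Set (ℝ × ℝ)) (p : ℝ × ℝ) : ℝ :=
  sSup {u : ℝ | u ∈ Icc (0:ℝ) (2*(m:ℝ)) ∧ Reach Dε p (u, (n:ℝ))}

/-- The pointer `r↓(p)`: for `p` with `p.2 > 0`, the maximum `u* ∈ [0,2m]` such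
that `p` and `(u*, 0)` are mutually reachable; on the bottom side `r↓(u,0) = u`. -/
def rDown (m : ℕ) (Dε : Set (ℝ × ℝ)) (p : ℝ × ℝ) : ℝ :=
  if p.2 = 0 then p.1
  else sSup {u : ℝ | u ∈ Icc (0:ℝ) (2*(m:ℝ)) ∧ Reach Dε p (u, (0:ℝ))}

/-- The cell `D_ij = [i-1,i] × [j-1,j]`. -/
def cellD (i j : ℕ) : Set (ℝ × ℝ) :=
  Icc ((i:ℝ)-1) (i:ℝ) ×ˢ Icc ((j:ℝ)-1) (j:ℝ)

/-- The top side `T_ij` of the cell `D_ij`. -/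
def cellT (i j : ℕ) : Set (ℝ × ℝ) := Icc ((i:ℝ)-1) (i:ℝ) ×ˢ {(j:ℝ)}

/-- The bottom side `B_ij` of the cell `D_ij`. -/
def cellB (i j : ℕ) : Set (ℝ × ℝ) := Icc ((i:ℝ)-1) (i:ℝ) ×ˢ {((j:ℝ)-1)}

/-- The right side `R_ij` of the cell `D_ij`. -/
def cellR (i j : ℕ) : Set (ℝ × ℝ) := {(i:ℝ)} ×ˢ Icc ((j:ℝ)-1) (j:ℝ)

/-- The left side `L_ij` of the cell `D_ij`. -/
def cellL (i j : ℕ) : Set (ℝ × ℝ) := {((i:ℝ)-1)} ×ˢ Icc ((j:ℝ)-1) (j:ℝ)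

/-- The partial order `≼` on `D`: `(u1,v1) ≼ (u2,v2)` iff `u1 ≤ u2` and `v1 ≥ v2`. -/
def prec (p q : ℝ × ℝ) : Prop := p.1 ≤ q.1 ∧ q.2 ≤ p.2

namespace Stmt16Aux

open Set

variable {Dε γ γ0 γ1 γ2 : Set (ℝ × ℝ)} {p q z w w' t A B D : ℝ × ℝ} {m n : ℕ}

lemma chain (h : IsMonPath Dε γ) (hp : p ∈ γ) (hq : q ∈ γ) : p ≤ q ∨ q ≤ p := by
  have hm := h.2.2 p hp q hq
  rcases le_total p.1 q.1 with h1 | h1 <;> rcases le_total p.2 q.2 with h2 | h2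
  · exact Or.inl ⟨h1, h2⟩
  · rcases eq_or_lt_of_le h1 with he | hl
    · exact Or.inr ⟨he.ge, h2⟩
    · have : p.2 = q.2 := by nlinarith
      exact Or.inl ⟨h1, this.le⟩
  · rcases eq_or_lt_of_le h1 with he | hl
    · exact Or.inl ⟨he.ge, h2⟩
    · have : p.2 = q.2 := by nlinarith
      exact Or.inr ⟨h1, this.ge⟩
  · exact Or.inr ⟨h1, h2⟩

lemma eq_of_le_of_phi (hle : p ≤ q) (h : p.1 + p.2 = q.1 + q.2) : p = q := by
  have h1 := hle.1; have h2 := hle.2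
  exact Prod.ext (by linarith) (by linarith)

lemma prod_nonneg_of_le (h : p ≤ q) : (p.1 - q.1) * (p.2 - q.2) ≥ 0 := by
  nlinarith [h.1, h.2]

lemma abs_sub_le_phi (h : IsMonPath Dε γ) (hw : w ∈ γ) (hw' : w' ∈ γ) :
    |w.1 - w'.1| ≤ |(w.1 + w.2) - (w'.1 + w'.2)| ∧
      |w.2 - w'.2| ≤ |(w.1 + w.2) - (w'.1 + w'.2)| := by
  rcases chain h hw hw' with hle | hle
  · have h1 := hle.1; have h2 := hle.2
    rw [abs_of_nonpos (by linarith), abs_of_nonpos (by linarith),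
      abs_of_nonpos (by linarith)]
    constructor <;> linarith
  · have h1 := hle.1; have h2 := hle.2
    rw [abs_of_nonneg (by linarith), abs_of_nonneg (by linarith),
      abs_of_nonneg (by linarith)]
    constructor <;> linarith

/-- A continuous "inverse of the sum parametrization" of a monotone path. -/
lemma exists_ext (h : IsMonPath Dε γ) :
    ∃ G : ℝ → ℝ × ℝ, Continuous G ∧ ∀ w ∈ γ, G (w.1 + w.2) = w := by
  classical
  have hWex : ∀ t : ℝ, t ∈ (fun w : ℝ × ℝ => w.1 + w.2) '' γ →
      ∃ w, w ∈ γ ∧ w.1 + w.2 = t := by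
    rintro t ⟨w, hw, hwt⟩; exact ⟨w, hw, hwt⟩
  choose! W hW1 hW2 using hWex
  have hlip1 : LipschitzOnWith 1 (fun t => (W t).1) ((fun w : ℝ × ℝ => w.1 + w.2) '' γ) := by
    rw [lipschitzOnWith_iff_dist_le_mul]
    intro s hs s' hs'
    have key := (abs_sub_le_phi h (hW1 s hs) (hW1 s' hs')).1
    rw [hW2 s hs, hW2 s' hs'] at key
    simpa [Real.dist_eq] using key
  have hlip2 : LipschitzOnWith 1 (fun t => (W t).2) ((fun w : ℝ × ℝ => w.1 + w.2) '' γ) := by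
    rw [lipschitzOnWith_iff_dist_le_mul]
    intro s hs s' hs'
    have key := (abs_sub_le_phi h (hW1 s hs) (hW1 s' hs')).2
    rw [hW2 s hs, hW2 s' hs'] at key
    simpa [Real.dist_eq] using key
  obtain ⟨g1, hg1, he1⟩ := hlip1.extend_real
  obtain ⟨g2, hg2, he2⟩ := hlip2.extend_real
  refine ⟨fun t => (g1 t, g2 t), (hg1.continuous).prodMk (hg2.continuous), ?_⟩
  intro w hw
  have hmem : w.1 + w.2 ∈ (fun w : ℝ × ℝ => w.1 + w.2) '' γ := ⟨w, hw, rfl⟩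
  have e1 : g1 (w.1 + w.2) = (W (w.1 + w.2)).1 := (he1 hmem).symm
  have e2 : g2 (w.1 + w.2) = (W (w.1 + w.2)).2 := (he2 hmem).symm
  have hWg := hW1 _ hmem
  have hWphi := hW2 _ hmem
  have : W (w.1 + w.2) = w := by
    rcases chain h hWg hw with hle | hle
    · exact eq_of_le_of_phi hle (by linarith)
    · exact (eq_of_le_of_phi hle (by linarith)).symm
  show (g1 (w.1 + w.2), g2 (w.1 + w.2)) = w
  rw [e1, e2]
  exact (Prod.mk.eta).trans this

lemma phi_mem_Icc_subset (h : IsMonPath Dε γ) (hw : w ∈ γ) (hw' : w' ∈ γ) :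
    Icc (w.1 + w.2) (w'.1 + w'.2) ⊆ (fun w : ℝ × ℝ => w.1 + w.2) '' γ := by
  have hE : IsPreconnected ((fun w : ℝ × ℝ => w.1 + w.2) '' γ) :=
    h.2.1.isPreconnected.image _ (Continuous.continuousOn (by fun_prop))
  exact hE.ordConnected.out ⟨w, hw, rfl⟩ ⟨w', hw', rfl⟩

lemma trunc_le (h : IsMonPath Dε γ) (hz : z ∈ γ) : IsMonPath Dε {w ∈ γ | w ≤ z} := by
  obtain ⟨G, hGc, hG⟩ := exists_ext h
  have himg : {w ∈ γ | w ≤ z} =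
      G '' (((fun w : ℝ × ℝ => w.1 + w.2) '' γ) ∩ Iic (z.1 + z.2)) := by
    ext w; constructor
    · rintro ⟨hwγ, hwz⟩
      exact ⟨w.1 + w.2, ⟨⟨w, hwγ, rfl⟩, by have := hwz.1; have := hwz.2; simp; linarith⟩, hG w hwγ⟩
    · rintro ⟨s, ⟨⟨w0, hw0, rfl⟩, hs⟩, rfl⟩
      rw [hG w0 hw0]
      refine ⟨hw0, ?_⟩
      rcases chain h hw0 hz with hle | hle
      · exact hle
      · have hs' : w0.1 + w0.2 ≤ z.1 + z.2 := by simpa using hs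
        have : z = w0 := eq_of_le_of_phi hle
          (le_antisymm (by have := hle.1; have := hle.2; linarith) hs')
        exact this.ge
  refine ⟨fun w hw => h.1 hw.1, ?_, fun a ha b hb => h.2.2 a ha.1 b hb.1⟩
  rw [himg]
  have hE : IsPreconnected ((fun w : ℝ × ℝ => w.1 + w.2) '' γ) :=
    h.2.1.isPreconnected.image _ (Continuous.continuousOn (by fun_prop))
  have hpre : IsPreconnected (((fun w : ℝ × ℝ => w.1 + w.2) '' γ) ∩ Iic (z.1 + z.2)) :=
    (hE.ordConnected.inter ordConnected_Iic).isPreconnected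
  exact ⟨⟨G (z.1 + z.2), ⟨z.1 + z.2, ⟨⟨z, hz, rfl⟩, self_mem_Iic⟩, rfl⟩⟩,
    hpre.image G hGc.continuousOn⟩

lemma trunc_ge (h : IsMonPath Dε γ) (hz : z ∈ γ) : IsMonPath Dε {w ∈ γ | z ≤ w} := by
  obtain ⟨G, hGc, hG⟩ := exists_ext h
  have himg : {w ∈ γ | z ≤ w} =
      G '' (((fun w : ℝ × ℝ => w.1 + w.2) '' γ) ∩ Ici (z.1 + z.2)) := by
    ext w; constructor
    · rintro ⟨hwγ, hwz⟩
      exact ⟨w.1 + w.2, ⟨⟨w, hwγ, rfl⟩, by have := hwz.1; have := hwz.2; simp; linarith⟩, hG w hwγ⟩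
    · rintro ⟨s, ⟨⟨w0, hw0, rfl⟩, hs⟩, rfl⟩
      rw [hG w0 hw0]
      refine ⟨hw0, ?_⟩
      rcases chain h hz hw0 with hle | hle
      · exact hle
      · have hs' : z.1 + z.2 ≤ w0.1 + w0.2 := by simpa using hs
        have : w0 = z := eq_of_le_of_phi hle
          (le_antisymm (by have := hle.1; have := hle.2; linarith) hs')
        exact this.ge
  refine ⟨fun w hw => h.1 hw.1, ?_, fun a ha b hb => h.2.2 a ha.1 b hb.1⟩
  rw [himg]
  have hE : IsPreconnected ((fun w : ℝ × ℝ => w.1 + w.2) '' γ) :=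
    h.2.1.isPreconnected.image _ (Continuous.continuousOn (by fun_prop))
  have hpre : IsPreconnected (((fun w : ℝ × ℝ => w.1 + w.2) '' γ) ∩ Ici (z.1 + z.2)) :=
    (hE.ordConnected.inter ordConnected_Ici).isPreconnected
  exact ⟨⟨G (z.1 + z.2), ⟨z.1 + z.2, ⟨⟨z, hz, rfl⟩, self_mem_Ici⟩, rfl⟩⟩,
    hpre.image G hGc.continuousOn⟩

lemma concat (h1 : IsMonPath Dε γ0) (h2 : IsMonPath Dε γ1) (hz0 : z ∈ γ0) (hz1 : z ∈ γ1)
    (hp : p ∈ γ0) (hq : q ∈ γ1) (hpz : p ≤ z) (hzq : z ≤ q) : Reach Dε p q := by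
  refine ⟨{w ∈ γ0 | w ≤ z} ∪ {w ∈ γ1 | z ≤ w}, ⟨?_, ?_, ?_⟩,
    Or.inl ⟨hp, hpz⟩, Or.inr ⟨hq, hzq⟩⟩
  · rintro w (hw | hw) <;> [exact h1.1 hw.1; exact h2.1 hw.1]
  · exact IsConnected.union ⟨z, ⟨hz0, le_refl z⟩, ⟨hz1, le_refl z⟩⟩
      (trunc_le h1 hz0).2.1 (trunc_ge h2 hz1).2.1
  · rintro a (ha | ha) b (hb | hb)
    · exact h1.2.2 a ha.1 b hb.1
    · exact prod_nonneg_of_le (ha.2.trans hb.2)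
    · have : b ≤ a := hb.2.trans ha.2
      nlinarith [this.1, this.2]
    · exact h2.2.2 a ha.1 b hb.1

lemma crossing {i j : ℕ} (h : IsMonPath Dε γ) (hp : p ∈ γ) (ht : t ∈ γ)
    (hp1 : (i:ℝ) - 1 ≤ p.1) (hp1' : p.1 ≤ i) (hp2 : (j:ℝ) - 1 ≤ p.2) (hp2' : p.2 ≤ j)
    (htj : (j:ℝ) ≤ t.2) :
    ∃ z ∈ γ, p ≤ z ∧ z.1 ≤ i ∧ z.2 ≤ j ∧ (z.1 = i ∨ z.2 = j) := by
  have hiv := h.2.1.isPreconnected.intermediate_value hp ht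
    (f := fun w : ℝ × ℝ => max (w.1 - i) (w.2 - j))
    (Continuous.continuousOn (by fun_prop))
  have h0 : (0:ℝ) ∈ Icc (max (p.1 - i) (p.2 - j)) (max (t.1 - i) (t.2 - j)) :=
    ⟨max_le (by linarith) (by linarith), le_max_of_le_right (by linarith)⟩
  obtain ⟨z, hzγ, hz0⟩ := hiv h0
  have hz0' : max (z.1 - (i:ℝ)) (z.2 - (j:ℝ)) = 0 := hz0
  have hz1 : z.1 - (i:ℝ) ≤ 0 := hz0' ▸ le_max_left _ _
  have hz2 : z.2 - (j:ℝ) ≤ 0 := hz0' ▸ le_max_right _ _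
  have hdisj : z.1 = i ∨ z.2 = j := by
    rcases le_or_gt (z.2 - (j:ℝ)) (z.1 - (i:ℝ)) with hc | hc
    · left; have := max_eq_left hc; rw [this] at hz0'; linarith
    · right; have := max_eq_right hc.le; rw [this] at hz0'; linarith
  rcases chain h hp hzγ with hle | hle
  · exact ⟨z, hzγ, hle, by linarith, by linarith, hdisj⟩
  · refine ⟨p, hp, le_refl p, hp1', hp2', ?_⟩
    rcases hdisj with he | he
    · left; exact le_antisymm hp1' (he ▸ hle.1)
    · right; exact le_antisymm hp2' (he ▸ hle.2)

end Stmt16Aux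

namespace Stmt16Aux

open Set

variable {Dε γ γ0 γ1 : Set (ℝ × ℝ)} {p q z z₀ A B D : ℝ × ℝ} {m n : ℕ} {u : ℝ}

/-- The reach set whose sup is `rUp`. -/
def RS (m n : ℕ) (Dε : Set (ℝ × ℝ)) (p : ℝ × ℝ) : Set ℝ :=
  {u : ℝ | u ∈ Icc (0:ℝ) (2*(m:ℝ)) ∧ Reach Dε p (u, (n:ℝ))}

lemma rUp_eq (m n : ℕ) (Dε : Set (ℝ × ℝ)) (p : ℝ × ℝ) :
    rUp m n Dε p = sSup (RS m n Dε p) := rfl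

lemma RS_bdd : BddAbove (RS m n Dε p) :=
  BddAbove.mono (fun u hu => hu.1) bddAbove_Icc

lemma mem_Dfull (hD : Dε ⊆ Dfull m n) (hz : z ∈ Dε) :
    0 ≤ z.1 ∧ z.1 ≤ 2*(m:ℝ) ∧ 0 ≤ z.2 ∧ z.2 ≤ n := by
  have := hD hz
  rw [Dfull, Set.mem_prod] at this
  exact ⟨this.1.1, this.1.2, this.2.1, this.2.2⟩

lemma RS_nonempty (hz : z ∈ gUp m n Dε) : (RS m n Dε z).Nonempty := by
  obtain ⟨hzD, w, hwT, hr⟩ := hz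
  rw [Tside, Set.mem_prod, Set.mem_singleton_iff] at hwT
  have hw : w = (w.1, (n:ℝ)) := Prod.ext rfl hwT.2
  exact ⟨w.1, hwT.1, hw ▸ hr⟩

lemma mem_gUp (hzD : z ∈ Dε) (hu : u ∈ Icc (0:ℝ) (2*(m:ℝ)))
    (hr : Reach Dε z (u, (n:ℝ))) : z ∈ gUp m n Dε :=
  ⟨hzD, (u, (n:ℝ)), Set.mem_prod.2 ⟨hu, rfl⟩, hr⟩

lemma reach_mono (hD : Dε ⊆ Dfull m n) (hr : Reach Dε p z) (hpz : p ≤ z)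
    (hne : (RS m n Dε z).Nonempty) : rUp m n Dε z ≤ rUp m n Dε p := by
  obtain ⟨γ, hγ, hp, hz⟩ := hr
  rw [rUp_eq, rUp_eq]
  refine csSup_le hne ?_
  rintro u ⟨huI, γ2, hγ2, hzγ2, hun⟩
  rcases chain hγ2 hzγ2 hun with hle | hle
  · exact le_csSup RS_bdd ⟨huI, concat hγ hγ2 hz hzγ2 hp hun hpz hle⟩
  · have hzf := mem_Dfull hD (hγ.1 hz)
    have hz2 : z.2 = (n:ℝ) := le_antisymm hzf.2.2.2 hle.2
    have hzn : z = (z.1, (n:ℝ)) := Prod.ext rfl hz2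
    have : z.1 ∈ RS m n Dε p := ⟨⟨hzf.1, hzf.2.1⟩, γ, hγ, hp, hzn ▸ hz⟩
    exact le_trans hle.1 (le_csSup RS_bdd this)

/-- The planar crossing lemma: a monotone path starting lower-right of `A` and ending at the
top row left of `B` must cross the path from `A` to `B`, so its start can reach `B`. -/
lemma cross_reach (hD : Dε ⊆ Dfull m n)
    (h0 : IsMonPath Dε γ0) (h1 : IsMonPath Dε γ1)
    (hA : A ∈ γ0) (hB : B ∈ γ0) (hq : q ∈ γ1) (hDm : D ∈ γ1)
    (hAB : A ≤ B) (hqD : q ≤ D) (hBn : B.2 = (n:ℝ)) (hDn : D.2 = (n:ℝ))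
    (hAq : A.1 ≤ q.1) (hqA : q.2 ≤ A.2) (hDB : D.1 ≤ B.1) :
    Reach Dε q B := by
  obtain ⟨G0, hG0c, hG0⟩ := exists_ext h0
  obtain ⟨G1, hG1c, hG1⟩ := exists_ext h1
  set tlo := max (A.1 + A.2) (q.1 + q.2) with htlo
  set thi := D.1 + D.2 with hthi
  have hAn : A.2 ≤ (n:ℝ) := (mem_Dfull hD (h0.1 hA)).2.2.2
  have hlh : tlo ≤ thi := by
    apply max_le
    · rw [hthi, hDn]; linarith [hqD.1]
    · exact add_le_add hqD.1 hqD.2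
  have hphiB : thi ≤ B.1 + B.2 := by rw [hthi, hDn, hBn]; linarith
  have hsub0 : Icc tlo thi ⊆ (fun w : ℝ × ℝ => w.1 + w.2) '' γ0 := by
    intro s hs
    exact phi_mem_Icc_subset h0 hA hB ⟨le_trans (le_max_left _ _) hs.1, le_trans hs.2 hphiB⟩
  have hsub1 : Icc tlo thi ⊆ (fun w : ℝ × ℝ => w.1 + w.2) '' γ1 := by
    intro s hs
    exact phi_mem_Icc_subset h1 hq hDm ⟨le_trans (le_max_right _ _) hs.1, hs.2⟩
  -- facts about G0 and G1 on the interval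
  have hG0m : ∀ s ∈ Icc tlo thi, G0 s ∈ γ0 ∧ (G0 s).1 + (G0 s).2 = s := by
    intro s hs
    obtain ⟨w, hw, hws⟩ := hsub0 hs
    have hws' : w.1 + w.2 = s := hws
    subst hws'
    rw [hG0 w hw]; exact ⟨hw, rfl⟩
  have hG1m : ∀ s ∈ Icc tlo thi, G1 s ∈ γ1 ∧ (G1 s).1 + (G1 s).2 = s := by
    intro s hs
    obtain ⟨w, hw, hws⟩ := hsub1 hs
    have hws' : w.1 + w.2 = s := hws
    subst hws'
    rw [hG1 w hw]; exact ⟨hw, rfl⟩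
  -- endpoint estimates for δ s = (G1 s).1 - (G0 s).1
  have hδhi : (G1 thi).1 - (G0 thi).1 ≤ 0 := by
    have h1D : G1 thi = D := by rw [hthi]; exact hG1 D hDm
    have h0m := hG0m thi ⟨hlh, le_refl _⟩
    have hb : (G0 thi).2 ≤ (n:ℝ) := (mem_Dfull hD (h0.1 h0m.1)).2.2.2
    have hs := h0m.2
    rw [h1D]
    have hthi' : thi = D.1 + D.2 := hthi
    linarith [hDn.le, hDn.ge]
  have hδlo : 0 ≤ (G1 tlo).1 - (G0 tlo).1 := by
    rcases le_total (A.1 + A.2) (q.1 + q.2) with hc | hc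
    · have he : tlo = q.1 + q.2 := max_eq_right hc
      have h1q : G1 tlo = q := by rw [he]; exact hG1 q hq
      have h0m := hG0m tlo ⟨le_refl _, hlh⟩
      have hphi := h0m.2
      rw [h1q]
      rcases chain h0 h0m.1 hA with hle | hle
      · linarith [hle.1, hAq]
      · linarith [hle.2, hqA, he.le, he.ge]
    · have he : tlo = A.1 + A.2 := max_eq_left hc
      have h0A : G0 tlo = A := by rw [he]; exact hG0 A hA
      have h1m := hG1m tlo ⟨le_refl _, hlh⟩
      have hphi := h1m.2
      rw [h0A]
      rcases chain h1 h1m.1 hq with hle | hle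
      · linarith [hle.1, hle.2, he.le, he.ge, hAq]
      · linarith [hle.1, hAq]
  -- IVT for δ
  have hcont : ContinuousOn (fun s => (G1 s).1 - (G0 s).1) (Icc tlo thi) :=
    Continuous.continuousOn (by fun_prop)
  have hivt := intermediate_value_Icc' hlh hcont
  have h0mem : (0:ℝ) ∈ Icc ((G1 thi).1 - (G0 thi).1) ((G1 tlo).1 - (G0 tlo).1) := ⟨hδhi, hδlo⟩
  obtain ⟨ts, hts, hts0⟩ := hivt h0mem
  have h0m := hG0m ts hts
  have h1m := hG1m ts hts
  have hzeq : G0 ts = G1 ts := by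
    have h1 : (G1 ts).1 = (G0 ts).1 := by
      have : (G1 ts).1 - (G0 ts).1 = 0 := hts0
      linarith
    have h2 : (G1 ts).2 = (G0 ts).2 := by
      have e0 := h0m.2; have e1 := h1m.2; linarith
    exact (Prod.ext h1 h2).symm
  set zs := G0 ts with hzs
  have hzs1 : zs ∈ γ1 := hzeq ▸ h1m.1
  have hqz : q ≤ zs := by
    rcases chain h1 hzs1 hq with hle | hle
    · have hphi : zs.1 + zs.2 = ts := h0m.2
      have hq' : q.1 + q.2 ≤ ts := le_trans (le_max_right _ _) hts.1
      exact ⟨by linarith [hle.1, hle.2], by linarith [hle.1, hle.2]⟩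
    · exact hle
  have hzB : zs ≤ B := by
    rcases chain h0 h0m.1 hB with hle | hle
    · exact hle
    · have hphi : zs.1 + zs.2 = ts := h0m.2
      have hB' : ts ≤ B.1 + B.2 := le_trans hts.2 hphiB
      exact ⟨by linarith [hle.1, hle.2], by linarith [hle.1, hle.2]⟩
  exact concat h1 h0 hzs1 h0m.1 hq hB hqz hzB

/-- Monotonicity of the pointer: a point lower-right of `z₀` has a pointer at least as large. -/
lemma rUp_mono (hD : Dε ⊆ Dfull m n) (hz : z₀ ∈ gUp m n Dε) (hq : q ∈ gUp m n Dε)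
    (h1' : z₀.1 ≤ q.1) (h2' : q.2 ≤ z₀.2) : rUp m n Dε z₀ ≤ rUp m n Dε q := by
  rw [rUp_eq, rUp_eq]
  refine csSup_le (RS_nonempty hz) ?_
  rintro u ⟨huI, γ0, hγ0, hz0, hun⟩
  obtain ⟨hqD, w, hwT, γ1, hγ1, hqγ1, hwγ1⟩ := hq
  rw [Tside, Set.mem_prod, Set.mem_singleton_iff] at hwT
  have hwn : w = (w.1, (n:ℝ)) := Prod.ext rfl hwT.2
  -- get D ∈ γ1 with q ≤ D, D.2 = n
  have hex : ∃ D, D ∈ γ1 ∧ q ≤ D ∧ D.2 = (n:ℝ) := by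
    rcases chain hγ1 hqγ1 hwγ1 with hle | hle
    · exact ⟨w, hwγ1, hle, hwT.2⟩
    · have hq2 : q.2 = (n:ℝ) :=
        le_antisymm (mem_Dfull hD hqD).2.2.2 (hwT.2 ▸ hle.2)
      exact ⟨q, hqγ1, le_refl q, hq2⟩
  obtain ⟨D, hDγ1, hqD', hDn⟩ := hex
  have hDf := mem_Dfull hD (hγ1.1 hDγ1)
  have hDmem : D.1 ∈ RS m n Dε q :=
    ⟨⟨hDf.1, hDf.2.1⟩, γ1, hγ1, hqγ1, (Prod.ext rfl hDn : D = (D.1, (n:ℝ))) ▸ hDγ1⟩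
  rcases le_total u D.1 with hc | hc
  · exact le_trans hc (le_csSup RS_bdd hDmem)
  · -- D.1 ≤ u : use the crossing lemma with B = (u, n)
    rcases chain hγ0 hz0 hun with hle | hle
    · have : Reach Dε q (u, (n:ℝ)) :=
        cross_reach hD hγ0 hγ1 hz0 hun hqγ1 hDγ1 hle hqD' rfl hDn h1' h2' hc
      exact le_csSup RS_bdd ⟨huI, this⟩
    · -- (u,n) ≤ z₀ : then u ≤ z₀.1 ≤ q.1 ≤ D.1 ≤ u, so u ≤ D.1 anyway
      exact le_trans (le_trans hle.1 (le_trans h1' hqD'.1)) (le_csSup RS_bdd hDmem)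

end Stmt16Aux

namespace Stmt16Aux

open Set

set_option maxHeartbeats 1600000

lemma fCurve_affine {k : ℕ} (f : ℕ → EuclideanSpace ℝ (Fin k)) (l : ℕ) (hl : 1 ≤ l)
    {v : ℝ} (hv1 : (l:ℝ) - 1 ≤ v) (hv2 : v ≤ l) :
    fCurve f v = ((l:ℝ) - v) • f (l-1) + (v - ((l:ℝ) - 1)) • f l := by
  rcases eq_or_lt_of_le hv2 with he | hlt
  · subst he
    rw [fCurve, Int.floor_natCast, Int.fract_natCast, Int.toNat_natCast]
    simp
  · have hfl : ⌊v⌋ = (l:ℤ) - 1 := by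
      rw [Int.floor_eq_iff]
      constructor
      · push_cast; linarith
      · push_cast; linarith
    have htn : ((l:ℤ) - 1).toNat = l - 1 := by omega
    have hfr : Int.fract v = v - ((l:ℝ) - 1) := by
      rw [Int.fract, hfl]; push_cast; ring
    have hl1 : l - 1 + 1 = l := by omega
    rw [fCurve, hfl, htn, hfr, hl1]
    congr 1
    congr 1
    ring

lemma fCurveExt_affine {k : ℕ} (x : ℕ → EuclideanSpace ℝ (Fin k)) (m i : ℕ)
    (hx : x m = x 0) (hm : 1 ≤ m) (hi1 : 1 ≤ i) (hi2 : i ≤ 2*m) :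
    ∃ P Q : EuclideanSpace ℝ (Fin k), ∀ u : ℝ, (i:ℝ) - 1 ≤ u → u ≤ i →
      fCurveExt m x u = ((i:ℝ) - u) • P + (u - ((i:ℝ) - 1)) • Q := by
  rcases le_or_gt i m with him | him
  · refine ⟨x (i-1), x i, fun u h1 h2 => ?_⟩
    rw [fCurveExt, if_pos (h2.trans (by exact_mod_cast him))]
    exact fCurve_affine x i hi1 h1 h2
  · refine ⟨x (i-1-m), x (i-m), fun u h1 h2 => ?_⟩
    have him' : (m:ℝ) ≤ (i:ℝ) - 1 := by
      have : (m:ℝ) + 1 ≤ (i:ℝ) := by exact_mod_cast him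
      linarith
    rcases le_or_gt u m with hum | hum
    · have hu : u = (m:ℝ) := le_antisymm hum (le_trans him' h1)
      have hieq : i = m + 1 := by
        have : (i:ℝ) ≤ (m:ℝ) + 1 := by linarith [h1, hu.le]
        have : i ≤ m + 1 := by exact_mod_cast this
        omega
      rw [fCurveExt, if_pos hum, hu]
      rw [show fCurve x (m:ℝ) = x m by
        rw [fCurve, Int.floor_natCast, Int.fract_natCast, Int.toNat_natCast]; simp]
      have e1 : i - 1 - m = 0 := by omega
      have e2 : (i:ℝ) - (m:ℝ) = 1 := by rw [hieq]; push_cast; ring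
      have e3 : (m:ℝ) - ((i:ℝ) - 1) = 0 := by rw [hieq]; push_cast; ring
      rw [e1, e2, e3, one_smul, zero_smul, add_zero, hx]
    · rw [fCurveExt, if_neg (not_le.2 hum)]
      have hc : ((i - m : ℕ) : ℝ) = (i:ℝ) - m := by
        have : m ≤ i := by omega
        push_cast [this]; ring
      have him1 : 1 ≤ i - m := by omega
      have hv1 : ((i - m : ℕ):ℝ) - 1 ≤ u - m := by rw [hc]; linarith
      have hv2 : u - m ≤ ((i - m : ℕ):ℝ) := by rw [hc]; linarith
      have := fCurve_affine x (i - m) him1 hv1 hv2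
      rw [this, hc]
      have e1 : i - m - 1 = i - 1 - m := by omega
      rw [e1]
      congr 1
      · congr 1; ring
      · congr 1; ring

lemma seg_reach {k m n : ℕ} {x y : ℕ → EuclideanSpace ℝ (Fin k)} {ε : ℝ}
    {Dε : Set (ℝ × ℝ)} (hDε : Dε = Dfree m n x y ε) (hx : x m = x 0) (hm : 1 ≤ m)
    {i j : ℕ} (hi1 : 1 ≤ i) (hi2 : i ≤ 2*m) (hj1 : 1 ≤ j) (hj2 : j ≤ n)
    {p q : ℝ × ℝ} (hp : p ∈ Dε) (hq : q ∈ Dε)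
    (hpi : (i:ℝ) - 1 ≤ p.1) (hpi' : p.1 ≤ i) (hpj : (j:ℝ) - 1 ≤ p.2) (hpj' : p.2 ≤ j)
    (hqi : (i:ℝ) - 1 ≤ q.1) (hqi' : q.1 ≤ i) (hqj : (j:ℝ) - 1 ≤ q.2) (hqj' : q.2 ≤ j)
    (hpq : p ≤ q) : Reach Dε p q := by
  obtain ⟨P, Q, hPQ⟩ := fCurveExt_affine x m i hx hm hi1 hi2
  refine ⟨segment ℝ p q, ⟨?_, ?_, ?_⟩, left_mem_segment ℝ p q, right_mem_segment ℝ p q⟩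
  · -- the segment is contained in the free space
    intro w hw
    rw [segment_eq_image] at hw
    obtain ⟨t, ht, rfl⟩ := hw
    have hw1 : ((1 - t) • p + t • q).1 = (1 - t) * p.1 + t * q.1 := rfl
    have hw2 : ((1 - t) • p + t • q).2 = (1 - t) * p.2 + t * q.2 := rfl
    have ht0 := ht.1; have ht1 := ht.2
    have hb1 : (i:ℝ) - 1 ≤ (1 - t) * p.1 + t * q.1 := by nlinarith
    have hb2 : (1 - t) * p.1 + t * q.1 ≤ (i:ℝ) := by nlinarith
    have hb3 : (j:ℝ) - 1 ≤ (1 - t) * p.2 + t * q.2 := by nlinarith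
    have hb4 : (1 - t) * p.2 + t * q.2 ≤ (j:ℝ) := by nlinarith
    have hi0 : (0:ℝ) ≤ (i:ℝ) - 1 := by
      have : (1:ℝ) ≤ (i:ℝ) := by exact_mod_cast hi1
      linarith
    have hj0 : (0:ℝ) ≤ (j:ℝ) - 1 := by
      have : (1:ℝ) ≤ (j:ℝ) := by exact_mod_cast hj1
      linarith
    have hi2m : (i:ℝ) ≤ 2*(m:ℝ) := by exact_mod_cast hi2
    have hjn : (j:ℝ) ≤ (n:ℝ) := by exact_mod_cast hj2
    rw [hDε]
    rw [hDε] at hp hq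
    refine ⟨?_, ?_⟩
    · rw [Dfull, Set.mem_prod, hw1, hw2]
      exact ⟨⟨by linarith, by linarith⟩, ⟨by linarith, by linarith⟩⟩
    · -- the distance bound
      have hfw : fCurveExt m x ((1 - t) • p + t • q).1
          = (1 - t) • fCurveExt m x p.1 + t • fCurveExt m x q.1 := by
        rw [hw1, hPQ _ hb1 hb2, hPQ _ hpi hpi', hPQ _ hqi hqi']
        match_scalars <;> ring
      have hgw : fCurve y ((1 - t) • p + t • q).2
          = (1 - t) • fCurve y p.2 + t • fCurve y q.2 := by
        rw [hw2, fCurve_affine y j hj1 hb3 hb4, fCurve_affine y j hj1 hpj hpj',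
          fCurve_affine y j hj1 hqj hqj']
        match_scalars <;> ring
      rw [hfw, hgw]
      have hd := dist_add_add_le ((1-t) • fCurveExt m x p.1) (t • fCurveExt m x q.1)
        ((1-t) • fCurve y p.2) (t • fCurve y q.2)
      have hd1 : dist ((1-t) • fCurveExt m x p.1) ((1-t) • fCurve y p.2)
          = (1-t) * dist (fCurveExt m x p.1) (fCurve y p.2) := by
        rw [dist_smul₀, Real.norm_eq_abs, abs_of_nonneg (by linarith)]
      have hd2 : dist (t • fCurveExt m x q.1) (t • fCurve y q.2)
          = t * dist (fCurveExt m x q.1) (fCurve y q.2) := by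
        rw [dist_smul₀, Real.norm_eq_abs, abs_of_nonneg ht0]
      have hp2 := hp.2
      have hq2 := hq.2
      have hεp : (0:ℝ) ≤ ε := le_trans dist_nonneg hp2
      calc dist ((1-t) • fCurveExt m x p.1 + t • fCurveExt m x q.1)
            ((1-t) • fCurve y p.2 + t • fCurve y q.2)
          ≤ (1-t) * dist (fCurveExt m x p.1) (fCurve y p.2)
            + t * dist (fCurveExt m x q.1) (fCurve y q.2) := by
            rw [← hd1, ← hd2]; exact hd
        _ ≤ (1-t) * ε + t * ε := by
            have := dist_nonneg (x := fCurveExt m x p.1) (y := fCurve y p.2)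
            nlinarith
        _ = ε := by ring
  · exact (convex_segment p q).isConnected ⟨p, left_mem_segment ℝ p q⟩
  · -- monotonicity on the segment
    intro a ha b hb
    rw [segment_eq_image] at ha hb
    obtain ⟨s, hs, rfl⟩ := ha
    obtain ⟨t, ht, rfl⟩ := hb
    have e1 : ((1-s) • p + s • q).1 = (1-s) * p.1 + s * q.1 := rfl
    have e2 : ((1-s) • p + s • q).2 = (1-s) * p.2 + s * q.2 := rfl
    have e3 : ((1-t) • p + t • q).1 = (1-t) * p.1 + t * q.1 := rfl
    have e4 : ((1-t) • p + t • q).2 = (1-t) * p.2 + t * q.2 := rfl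
    rw [e1, e2, e3, e4]
    have h1 := hpq.1; have h2 := hpq.2
    nlinarith [sq_nonneg (s - t), mul_nonneg (mul_nonneg (sq_nonneg (s-t)) (sub_nonneg.2 h1)) (sub_nonneg.2 h2)]

end Stmt16Aux


open Stmt16Aux

theorem stmt16
    (k m n : ℕ) (hk : 1 ≤ k) (hm : 1 ≤ m) (hn : 1 ≤ n)
    (x y : ℕ → EuclideanSpace ℝ (Fin k)) (hx : x m = x 0) (hy : y n = y 0)
    (ε : ℝ) (hε : 0 ≤ ε)
    (Dε : Set (ℝ × ℝ)) (hDε : Dε = Dfree m n x y ε)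
    (i j : ℕ) (hi1 : 1 ≤ i) (hi2 : i ≤ 2*m) (hj1 : 1 ≤ j) (hj2 : j ≤ n)
    (rstar : ℝ)
    (hT : (gUp m n Dε ∩ cellT i j).Nonempty)
    (hconst : ∀ p ∈ gUp m n Dε ∩ cellT i j, rUp m n Dε p = rstar) :
    ((gUp m n Dε ∩ cellR i j = ∅ →
        ∀ p ∈ gUp m n Dε ∩ (cellL i j ∪ cellB i j), rUp m n Dε p = rstar) ∧
      (∀ a b : ℝ, a ≤ b →
        gUp m n Dε ∩ cellR i j = {(i:ℝ)} ×ˢ Icc a b →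
        ((∀ v : ℝ, ((i:ℝ)-1, v) ∈ gUp m n Dε ∩ cellL i j →
            (b < v → rUp m n Dε ((i:ℝ)-1, v) = rstar) ∧
            (a < v → v ≤ b → rUp m n Dε ((i:ℝ)-1, v) = rUp m n Dε ((i:ℝ), v)) ∧
            (v ≤ a → rUp m n Dε ((i:ℝ)-1, v) = rUp m n Dε ((i:ℝ), a))) ∧
          (∀ u : ℝ, (u, (j:ℝ)-1) ∈ gUp m n Dε ∩ cellB i j →
            rUp m n Dε (u, (j:ℝ)-1) = rUp m n Dε ((i:ℝ), a))))) := by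
  have hD : Dε ⊆ Dfull m n := by
    rw [hDε]; exact fun w hw => hw.1
  obtain ⟨z₀, hz₀g, hz₀T⟩ := hT
  rw [cellT, Set.mem_prod, Set.mem_singleton_iff] at hz₀T
  have hrstar : rUp m n Dε z₀ = rstar := hconst z₀ ⟨hz₀g, by
    rw [cellT, Set.mem_prod, Set.mem_singleton_iff]; exact hz₀T⟩
  have hjn : (j:ℝ) ≤ (n:ℝ) := by exact_mod_cast hj2
  have hj0 : (1:ℝ) ≤ (j:ℝ) := by exact_mod_cast hj1
  have hi0 : (1:ℝ) ≤ (i:ℝ) := by exact_mod_cast hi1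
  -- every element of the reach set of a cell point factors through TR_ij
  have key : ∀ p : ℝ × ℝ, p ∈ gUp m n Dε → (i:ℝ)-1 ≤ p.1 → p.1 ≤ i → (j:ℝ)-1 ≤ p.2 → p.2 ≤ j →
      ∀ u ∈ RS m n Dε p, ∃ zz : ℝ × ℝ, zz ∈ gUp m n Dε ∧
        ((i:ℝ)-1 ≤ zz.1 ∧ zz.1 ≤ i ∧ (j:ℝ)-1 ≤ zz.2 ∧ zz.2 ≤ j) ∧ p.2 ≤ zz.2 ∧
        (zz.1 = i ∨ zz.2 = j) ∧ u ∈ RS m n Dε zz := by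
    rintro p hpg hp1 hp2 hp3 hp4 u ⟨huI, γ2, hγ2, hpγ2, hun⟩
    obtain ⟨zz, hzzγ, hpzz, hz1, hz2, hdisj⟩ :=
      crossing hγ2 hpγ2 hun hp1 hp2 hp3 hp4 hjn
    exact ⟨zz, mem_gUp (hγ2.1 hzzγ) huI ⟨γ2, hγ2, hzzγ, hun⟩,
      ⟨le_trans hp1 hpzz.1, hz1, le_trans hp3 hpzz.2, hz2⟩, hpzz.2, hdisj,
      huI, γ2, hγ2, hzzγ, hun⟩
  -- points lower-right of z₀ have pointer at least rstar
  have S1 : ∀ q : ℝ × ℝ, q ∈ gUp m n Dε → z₀.1 ≤ q.1 → q.2 ≤ (j:ℝ) → rstar ≤ rUp m n Dε q := by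
    intro q hqg hq1 hq2
    rw [← hrstar]
    exact rUp_mono hD hz₀g hqg hq1 (by rw [hz₀T.2]; exact hq2)
  -- all points of g↑ in the cell have pointer at least rstar
  have low : ∀ p : ℝ × ℝ, p ∈ gUp m n Dε → (i:ℝ)-1 ≤ p.1 → p.1 ≤ i → (j:ℝ)-1 ≤ p.2 → p.2 ≤ j →
      rstar ≤ rUp m n Dε p := by
    intro p hpg hp1 hp2 hp3 hp4
    rcases le_total p.1 z₀.1 with hc | hc
    · have hple : p ≤ z₀ := ⟨hc, by rw [hz₀T.2]; exact hp4⟩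
      have hreach : Reach Dε p z₀ := seg_reach hDε hx hm hi1 hi2 hj1 hj2 hpg.1 hz₀g.1
        hp1 hp2 hp3 hp4 hz₀T.1.1 hz₀T.1.2 (by rw [hz₀T.2]; linarith) (le_of_eq hz₀T.2) hple
      rw [← hrstar]
      exact reach_mono hD hreach hple (RS_nonempty hz₀g)
    · exact S1 p hpg hc hp4
  -- segment-based comparison within the cell
  have segmono : ∀ p q : ℝ × ℝ, p ∈ gUp m n Dε → q ∈ gUp m n Dε →
      (i:ℝ)-1 ≤ p.1 → p.1 ≤ i → (j:ℝ)-1 ≤ p.2 → p.2 ≤ j →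
      (i:ℝ)-1 ≤ q.1 → q.1 ≤ i → (j:ℝ)-1 ≤ q.2 → q.2 ≤ j →
      p ≤ q → rUp m n Dε q ≤ rUp m n Dε p := by
    intro p q hpg hqg hp1 hp2 hp3 hp4 hq1 hq2 hq3 hq4 hpq
    exact reach_mono hD
      (seg_reach hDε hx hm hi1 hi2 hj1 hj2 hpg.1 hqg.1 hp1 hp2 hp3 hp4 hq1 hq2 hq3 hq4 hpq)
      hpq (RS_nonempty hqg)
  constructor
  · -- part (a)
    intro hRe p hp
    obtain ⟨hpg, hpLB⟩ := hp
    have hpb : (i:ℝ)-1 ≤ p.1 ∧ p.1 ≤ i ∧ (j:ℝ)-1 ≤ p.2 ∧ p.2 ≤ j := by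
      rcases hpLB with hL | hB
      · rw [cellL, Set.mem_prod, Set.mem_singleton_iff] at hL
        exact ⟨hL.1.ge, by rw [hL.1]; linarith, hL.2.1, hL.2.2⟩
      · rw [cellB, Set.mem_prod, Set.mem_singleton_iff] at hB
        exact ⟨hB.1.1, hB.1.2, hB.2.ge, by rw [hB.2]; linarith⟩
    refine le_antisymm ?_ (low p hpg hpb.1 hpb.2.1 hpb.2.2.1 hpb.2.2.2)
    rw [rUp_eq]
    refine csSup_le (RS_nonempty hpg) ?_
    intro u hu
    obtain ⟨zz, hzzg, hzzb, hp2zz, hdisj, huzz⟩ :=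
      key p hpg hpb.1 hpb.2.1 hpb.2.2.1 hpb.2.2.2 u hu
    rcases hdisj with h1 | h2
    · have : zz ∈ gUp m n Dε ∩ cellR i j := ⟨hzzg, by
        rw [cellR, Set.mem_prod, Set.mem_singleton_iff]
        exact ⟨h1, hzzb.2.2.1, hzzb.2.2.2⟩⟩
      rw [hRe] at this
      exact absurd this (Set.notMem_empty zz)
    · have := hconst zz ⟨hzzg, by
        rw [cellT, Set.mem_prod, Set.mem_singleton_iff]
        exact ⟨⟨hzzb.1, hzzb.2.1⟩, h2⟩⟩
      calc u ≤ rUp m n Dε zz := by rw [rUp_eq]; exact le_csSup RS_bdd huzz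
        _ = rstar := this
  · -- part (b)
    intro a b hab hR
    have hiaR : ((i:ℝ), a) ∈ gUp m n Dε ∩ cellR i j := by
      rw [hR]; exact Set.mem_prod.2 ⟨rfl, le_refl a, hab⟩
    have hiag : ((i:ℝ), a) ∈ gUp m n Dε := hiaR.1
    have haj : ((j:ℝ)-1) ≤ a ∧ a ≤ (j:ℝ) := by
      have := hiaR.2
      rw [cellR, Set.mem_prod] at this
      exact this.2
    -- generic upper bound against a point (i,w) with w ≤ j lower than all crossing points
    have upb : ∀ (p : ℝ × ℝ) (w : ℝ), p ∈ gUp m n Dε →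
        (i:ℝ)-1 ≤ p.1 → p.1 ≤ i → (j:ℝ)-1 ≤ p.2 → p.2 ≤ j →
        ((i:ℝ), w) ∈ gUp m n Dε → w ≤ (j:ℝ) →
        (∀ zz : ℝ × ℝ, zz ∈ gUp m n Dε → zz.1 = i → (j:ℝ)-1 ≤ zz.2 → zz.2 ≤ j →
          p.2 ≤ zz.2 → w ≤ zz.2) →
        rUp m n Dε p ≤ rUp m n Dε ((i:ℝ), w) := by
      intro p w hpg hp1 hp2 hp3 hp4 hwg hwj hzw
      rw [rUp_eq]
      refine csSup_le (RS_nonempty hpg) ?_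
      intro u hu
      obtain ⟨zz, hzzg, hzzb, hp2zz, hdisj, huzz⟩ := key p hpg hp1 hp2 hp3 hp4 u hu
      rcases hdisj with h1 | h2
      · -- crossing on the right side
        have hwzz : w ≤ zz.2 := hzw zz hzzg h1 hzzb.2.2.1 hzzb.2.2.2 hp2zz
        have h3 : rUp m n Dε zz ≤ rUp m n Dε ((i:ℝ), w) :=
          rUp_mono hD hzzg hwg (by rw [h1]) hwzz
        calc u ≤ rUp m n Dε zz := by rw [rUp_eq]; exact le_csSup RS_bdd huzz
          _ ≤ _ := h3
      · -- crossing on the top side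
        have := hconst zz ⟨hzzg, by
          rw [cellT, Set.mem_prod, Set.mem_singleton_iff]
          exact ⟨⟨hzzb.1, hzzb.2.1⟩, h2⟩⟩
        have hs1 : rstar ≤ rUp m n Dε ((i:ℝ), w) :=
          S1 ((i:ℝ), w) hwg (by
            have : z₀.1 ≤ (i:ℝ) := hz₀T.1.2
            exact this) hwj
        calc u ≤ rUp m n Dε zz := by rw [rUp_eq]; exact le_csSup RS_bdd huzz
          _ = rstar := this
          _ ≤ _ := hs1
    constructor
    · -- left side of the cell
      intro v hv
      obtain ⟨hvg, hvL⟩ := hv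
      rw [cellL, Set.mem_prod, Set.mem_singleton_iff] at hvL
      have hv1 : (j:ℝ)-1 ≤ v := hvL.2.1
      have hv2 : v ≤ (j:ℝ) := hvL.2.2
      have hb1 : (i:ℝ)-1 ≤ ((i:ℝ)-1, v).1 := le_refl _
      have hb2 : ((i:ℝ)-1, v).1 ≤ (i:ℝ) := by show (i:ℝ)-1 ≤ (i:ℝ); linarith
      refine ⟨?_, ?_, ?_⟩
      · -- v > b : pointer equals rstar
        intro hbv
        refine le_antisymm ?_ (low _ hvg hb1 hb2 hv1 hv2)
        rw [rUp_eq]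
        refine csSup_le (RS_nonempty hvg) ?_
        intro u hu
        obtain ⟨zz, hzzg, hzzb, hp2zz, hdisj, huzz⟩ := key _ hvg hb1 hb2 hv1 hv2 u hu
        rcases hdisj with h1 | h2
        · -- impossible: the crossing point would lie in g↑ ∩ R_ij above b
          have : zz ∈ gUp m n Dε ∩ cellR i j := ⟨hzzg, by
            rw [cellR, Set.mem_prod, Set.mem_singleton_iff]
            exact ⟨h1, hzzb.2.2.1, hzzb.2.2.2⟩⟩
          rw [hR] at this
          have hzzab : zz.2 ∈ Icc a b := (Set.mem_prod.1 this).2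
          have hvzz : v ≤ zz.2 := hp2zz
          have : zz.2 ≤ b := hzzab.2
          linarith
        · have := hconst zz ⟨hzzg, by
            rw [cellT, Set.mem_prod, Set.mem_singleton_iff]
            exact ⟨⟨hzzb.1, hzzb.2.1⟩, h2⟩⟩
          calc u ≤ rUp m n Dε zz := by rw [rUp_eq]; exact le_csSup RS_bdd huzz
            _ = rstar := this
      · -- a < v ≤ b : pointer equals that of (i,v)
        intro hav hvb
        have hivR : ((i:ℝ), v) ∈ gUp m n Dε ∩ cellR i j := by
          rw [hR]; exact Set.mem_prod.2 ⟨rfl, hav.le, hvb⟩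
        have hivg := hivR.1
        refine le_antisymm ?_ ?_
        · refine upb _ v hvg hb1 hb2 hv1 hv2 hivg hv2 ?_
          intro zz hzzg hzz1 hzz2 hzz3 hzz4
          exact hzz4
        · refine segmono _ _ hvg hivg hb1 hb2 hv1 hv2 (by show (i:ℝ)-1 ≤ (i:ℝ); linarith)
            (le_refl _) hv1 hv2 ⟨by show (i:ℝ)-1 ≤ (i:ℝ); linarith, le_refl v⟩
      · -- v ≤ a : pointer equals that of (i,a)
        intro hva
        refine le_antisymm ?_ ?_
        · refine upb _ a hvg hb1 hb2 hv1 hv2 hiag haj.2 ?_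
          intro zz hzzg hzz1 hzz2 hzz3 hzz4
          have : zz ∈ gUp m n Dε ∩ cellR i j := ⟨hzzg, by
            rw [cellR, Set.mem_prod, Set.mem_singleton_iff]
            exact ⟨hzz1, hzz2, hzz3⟩⟩
          rw [hR] at this
          exact ((Set.mem_prod.1 this).2).1
        · refine segmono _ _ hvg hiag hb1 hb2 hv1 hv2 (by show (i:ℝ)-1 ≤ (i:ℝ); linarith)
            (le_refl _) haj.1 haj.2 ⟨by show (i:ℝ)-1 ≤ (i:ℝ); linarith, hva⟩
    · -- bottom side of the cell
      intro u0 hu0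
      obtain ⟨hu0g, hu0B⟩ := hu0
      rw [cellB, Set.mem_prod, Set.mem_singleton_iff] at hu0B
      have hb1 : (i:ℝ)-1 ≤ (u0, (j:ℝ)-1).1 := hu0B.1.1
      have hb2 : (u0, (j:ℝ)-1).1 ≤ (i:ℝ) := hu0B.1.2
      have hb3 : (j:ℝ)-1 ≤ (u0, (j:ℝ)-1).2 := le_refl _
      have hb4 : (u0, (j:ℝ)-1).2 ≤ (j:ℝ) := by show (j:ℝ)-1 ≤ (j:ℝ); linarith
      refine le_antisymm ?_ ?_
      · refine upb _ a hu0g hb1 hb2 hb3 hb4 hiag haj.2 ?_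
        intro zz hzzg hzz1 hzz2 hzz3 hzz4
        have : zz ∈ gUp m n Dε ∩ cellR i j := ⟨hzzg, by
          rw [cellR, Set.mem_prod, Set.mem_singleton_iff]
          exact ⟨hzz1, hzz2, hzz3⟩⟩
        rw [hR] at this
        exact ((Set.mem_prod.1 this).2).1
      · refine segmono _ _ hu0g hiag hb1 hb2 hb3 hb4 (by show (i:ℝ)-1 ≤ (i:ℝ); linarith)
          (le_refl _) haj.1 haj.2 ⟨hu0B.1.2, haj.1⟩
end
end

section
/- For each i ∈ {1,…,2m} and j ∈ {1,…,n}, there exists a partition I↑(i,j) of the set g↑ ∩ R_ij into pairwise disjoint intervals such that the pointer r↑ is constant on each interval of I↑(i,j), and the number of intervals satisfies |I↑(i,j)| ≤ 4m + 1. -/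
open Set

noncomputable section

/-- points on a monotone path are comparable in the product order -/
lemma monPath_chain {Dε γ : Set (ℝ × ℝ)} (h : IsMonPath Dε γ)
    {p q : ℝ × ℝ} (hp : p ∈ γ) (hq : q ∈ γ) : p ≤ q ∨ q ≤ p := by
  have hm := h.2.2 p hp q hq
  rcases le_total p.1 q.1 with h1 | h1 <;> rcases le_total p.2 q.2 with h2 | h2
  · exact Or.inl ⟨h1, h2⟩
  · have : (p.1 - q.1) * (p.2 - q.2) ≤ 0 :=
      mul_nonpos_of_nonpos_of_nonneg (by linarith) (by linarith)
    have h0 : (p.1 - q.1) * (p.2 - q.2) = 0 := le_antisymm this hm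
    rcases mul_eq_zero.1 h0 with h' | h'
    · exact Or.inr ⟨by linarith, h2⟩
    · exact Or.inl ⟨h1, by linarith⟩
  · have : (p.1 - q.1) * (p.2 - q.2) ≤ 0 :=
      mul_nonpos_of_nonneg_of_nonpos (by linarith) (by linarith)
    have h0 : (p.1 - q.1) * (p.2 - q.2) = 0 := le_antisymm this hm
    rcases mul_eq_zero.1 h0 with h' | h'
    · exact Or.inl ⟨by linarith, h2⟩
    · exact Or.inr ⟨h1, by linarith⟩
  · exact Or.inr ⟨h1, h2⟩

lemma monPath_sum_inj {Dε γ : Set (ℝ × ℝ)} (h : IsMonPath Dε γ)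
    {p q : ℝ × ℝ} (hp : p ∈ γ) (hq : q ∈ γ) (hs : p.1 + p.2 = q.1 + q.2) : p = q := by
  have hm := h.2.2 p hp q hq
  have h2 : p.2 = q.2 := by nlinarith
  have h1 : p.1 = q.1 := by linarith
  exact Prod.ext h1 h2

/-- truncating a monotone path above a point of it -/
lemma monPath_inter_Ici {Dε γ : Set (ℝ × ℝ)} (h : IsMonPath Dε γ)
    {c : ℝ × ℝ} (hc : c ∈ γ) : IsMonPath Dε (γ ∩ Ici c) := by
  refine ⟨(inter_subset_left).trans h.1, ?_, fun p hp q hq => h.2.2 p hp.1 q hq.1⟩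
  constructor
  · exact ⟨c, hc, le_refl c⟩
  · -- preconnected: image of the subtype γ under a truncation map
    have : PreconnectedSpace γ := Subtype.preconnectedSpace h.2.1.isPreconnected
    have hFcont : Continuous (fun q : γ =>
        if c.1 + c.2 ≤ (q:ℝ×ℝ).1 + (q:ℝ×ℝ).2 then (q:ℝ×ℝ) else c) := by
      apply Continuous.if_le continuous_subtype_val continuous_const continuous_const
        (by fun_prop)
      intro q hq
      exact (monPath_sum_inj h hc q.2 hq).symm
    have himg : (fun q : γ =>
        if c.1 + c.2 ≤ (q:ℝ×ℝ).1 + (q:ℝ×ℝ).2 then (q:ℝ×ℝ) else c) '' univ = γ ∩ Ici c := by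
      apply Subset.antisymm
      · rintro p ⟨q, -, rfl⟩
        by_cases hle : c.1 + c.2 ≤ (q:ℝ×ℝ).1 + (q:ℝ×ℝ).2
        · simp only [if_pos hle]
          refine ⟨q.2, ?_⟩
          rcases monPath_chain h hc q.2 with h' | h'
          · exact h'
          · have : (q:ℝ×ℝ).1 + (q:ℝ×ℝ).2 = c.1 + c.2 := le_antisymm (add_le_add h'.1 h'.2) hle
            rw [monPath_sum_inj h q.2 hc this]; exact le_refl c
        · simp only [if_neg hle]
          exact ⟨hc, le_refl c⟩
      · rintro p ⟨hpγ, hpc⟩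
        refine ⟨⟨p, hpγ⟩, mem_univ _, ?_⟩
        simp only [if_pos (add_le_add hpc.1 hpc.2)]
    rw [← himg]
    exact (isPreconnected_univ.image _ hFcont.continuousOn)

/-- union of two monotone paths sharing a point, with cross monotonicity -/
lemma monPath_union {Dε γ₁ γ₂ : Set (ℝ × ℝ)} (h1 : IsMonPath Dε γ₁) (h2 : IsMonPath Dε γ₂)
    {p₀ : ℝ × ℝ} (hp1 : p₀ ∈ γ₁) (hp2 : p₀ ∈ γ₂)
    (hcross : ∀ p ∈ γ₁, ∀ q ∈ γ₂, (p.1 - q.1) * (p.2 - q.2) ≥ 0) :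
    IsMonPath Dε (γ₁ ∪ γ₂) := by
  refine ⟨union_subset h1.1 h2.1, IsConnected.union ⟨p₀, hp1, hp2⟩ h1.2.1 h2.2.1, ?_⟩
  rintro p (hp | hp) q (hq | hq)
  · exact h1.2.2 p hp q hq
  · exact hcross p hp q hq
  · have := hcross q hq p hp; nlinarith [this]
  · exact h2.2.2 p hp q hq

/-- a vertical segment inside the free space is a monotone path -/
lemma monPath_vert {Dε : Set (ℝ × ℝ)} (a b w : ℝ) (hab : a ≤ b)
    (hsub : ∀ v ∈ Icc a b, (w, v) ∈ Dε) :
    IsMonPath Dε ({w} ×ˢ Icc a b) := by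
  refine ⟨?_, IsConnected.prod isConnected_singleton (isConnected_Icc hab), ?_⟩
  · rintro ⟨p1, p2⟩ ⟨hp1, hp2⟩
    simp only [mem_singleton_iff] at hp1; subst hp1; exact hsub _ hp2
  · rintro ⟨p1, p2⟩ ⟨hp1, -⟩ ⟨q1, q2⟩ ⟨hq1, -⟩
    simp only [mem_singleton_iff] at hp1 hq1; subst hp1; subst hq1; simp

/-- a horizontal segment inside the free space is a monotone path -/
lemma monPath_horiz {Dε : Set (ℝ × ℝ)} (a b w : ℝ) (hab : a ≤ b)
    (hsub : ∀ u ∈ Icc a b, (u, w) ∈ Dε) :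
    IsMonPath Dε (Icc a b ×ˢ {w}) := by
  refine ⟨?_, IsConnected.prod (isConnected_Icc hab) isConnected_singleton, ?_⟩
  · rintro ⟨p1, p2⟩ ⟨hp1, hp2⟩
    simp only [mem_singleton_iff] at hp2; subst hp2; exact hsub _ hp1
  · rintro ⟨p1, p2⟩ ⟨-, hp2⟩ ⟨q1, q2⟩ ⟨-, hq2⟩
    simp only [mem_singleton_iff] at hp2 hq2; subst hp2; subst hq2; simp

/-- `fCurve` is affine on the cell `[j-1, j]` -/
lemma fCurve_affine {k : ℕ} (z : ℕ → EuclideanSpace ℝ (Fin k)) (j : ℕ) (hj : 1 ≤ j)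
    (v : ℝ) (hv : v ∈ Icc ((j:ℝ)-1) j) :
    fCurve z v = (1 - (v - ((j:ℝ)-1))) • z (j-1) + (v - ((j:ℝ)-1)) • z j := by
  rcases eq_or_lt_of_le hv.2 with rfl | hvj
  · have h0 : Int.fract ((j:ℕ):ℝ) = 0 := by
      rw [Int.fract_natCast]
    have h1 : (⌊((j:ℕ):ℝ)⌋).toNat = j := by
      rw [Int.floor_natCast]; simp
    simp only [fCurve, h0, h1]
    have : ((j:ℝ) - ((j:ℝ)-1)) = 1 := by ring
    rw [this]; simp
  · have hfl : ⌊v⌋ = (j:ℤ) - 1 := by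
      rw [Int.floor_eq_iff]
      constructor
      · push_cast; linarith [hv.1]
      · push_cast; linarith
    have hfr : Int.fract v = v - ((j:ℝ)-1) := by
      rw [Int.fract, hfl]; push_cast; ring
    have htn : (⌊v⌋).toNat = j - 1 := by
      rw [hfl]; omega
    have htn1 : (⌊v⌋).toNat + 1 = j := by omega
    simp only [fCurve, hfr, htn, htn1]
    have hj1 : j - 1 + 1 = j := by omega
    rw [hj1]

/-- `fCurveExt` is affine on each cell `[c-1, c]`, `1 ≤ c ≤ 2m` -/
lemma fCurveExt_affine {k : ℕ} (m : ℕ) (hm : 1 ≤ m) (x : ℕ → EuclideanSpace ℝ (Fin k))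
    (hx : x m = x 0) (c : ℕ) (hc1 : 1 ≤ c) (hc2 : c ≤ 2*m) :
    ∃ A B : EuclideanSpace ℝ (Fin k), ∀ u ∈ Icc ((c:ℝ)-1) (c:ℝ),
      fCurveExt m x u = (1 - (u - ((c:ℝ)-1))) • A + (u - ((c:ℝ)-1)) • B := by
  by_cases hcm : c ≤ m
  · refine ⟨x (c-1), x c, fun u hu => ?_⟩
    have hum : u ≤ (m:ℝ) := le_trans hu.2 (by exact_mod_cast hcm)
    rw [fCurveExt, if_pos hum]
    exact fCurve_affine x c hc1 u hu
  · push_neg at hcm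
    refine ⟨x (c-m-1), x (c-m), fun u hu => ?_⟩
    have hcm1 : m + 1 ≤ c := hcm
    by_cases hum : u ≤ (m:ℝ)
    · -- then u = m and c = m + 1
      have h1 : ((c:ℝ)-1) ≤ u := hu.1
      have hcm' : (c:ℝ) ≤ (m:ℝ) + 1 := by linarith
      have hceq : c = m + 1 := by
        have : (c:ℕ) ≤ m + 1 := by exact_mod_cast hcm'
        omega
      have hueq : u = (m:ℝ) := by
        rw [hceq] at h1; push_cast at h1; linarith
      subst hueq
      rw [fCurveExt, if_pos le_rfl]
      have : fCurve x ((m:ℕ):ℝ) = x m := by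
        simp [fCurve, Int.fract_natCast, Int.floor_natCast]
      rw [this, hx, hceq]
      have he1 : ((m:ℝ)) - (((m+1:ℕ):ℝ) - 1) = 0 := by push_cast; ring
      have he0 : m + 1 - m - 1 = 0 := by omega
      rw [he1, he0]
      simp
    · push_neg at hum
      rw [fCurveExt, if_neg (not_le.mpr hum)]
      have hsub : u - (m:ℝ) ∈ Icc (((c-m:ℕ):ℝ)-1) ((c-m:ℕ):ℝ) := by
        constructor
        · have := hu.1; push_cast [Nat.cast_sub (by omega : m ≤ c)]; linarith
        · have := hu.2; push_cast [Nat.cast_sub (by omega : m ≤ c)]; linarith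
      have := fCurve_affine x (c-m) (by omega) (u - m) hsub
      rw [this]
      have hco : ((c-m:ℕ):ℝ) = (c:ℝ) - (m:ℝ) := by
        push_cast [Nat.cast_sub (by omega : m ≤ c)]; ring
      rw [hco]
      have harg : u - (m:ℝ) - ((c:ℝ) - (m:ℝ) - 1) = u - ((c:ℝ)-1) := by ring
      rw [harg]

/-- convexity of norm along an affine segment -/
lemma seg_convex {E : Type*} [NormedAddCommGroup E] [NormedSpace ℝ E]
    (A B b : E) (ε s t u : ℝ) (hsu : s ≤ u) (hut : u ≤ t)
    (h1 : ‖(1-s)•A + s•B - b‖ ≤ ε) (h2 : ‖(1-t)•A + t•B - b‖ ≤ ε) :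
    ‖(1-u)•A + u•B - b‖ ≤ ε := by
  rcases eq_or_lt_of_le (hsu.trans hut) with h | hst
  · have : u = s := le_antisymm (h ▸ hut) hsu
    rw [this]; exact h1
  · set θ := (u - s) / (t - s) with hθdef
    have hts : (0:ℝ) < t - s := by linarith
    have hθ0 : 0 ≤ θ := div_nonneg (by linarith) hts.le
    have hθ1 : θ ≤ 1 := by
      rw [div_le_one hts]; linarith
    have hu : u = (1-θ)*s + θ*t := by
      have hθm : θ*(t-s) = u-s := by rw [hθdef]; exact div_mul_cancel₀ _ hts.ne'
      linear_combination -hθm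
    have key : (1-u)•A + u•B - b
        = (1-θ)•((1-s)•A + s•B - b) + θ•((1-t)•A + t•B - b) := by
      rw [hu]; module
    rw [key]
    calc ‖(1-θ)•((1-s)•A + s•B - b) + θ•((1-t)•A + t•B - b)‖
        ≤ ‖(1-θ)•((1-s)•A + s•B - b)‖ + ‖θ•((1-t)•A + t•B - b)‖ := norm_add_le _ _
      _ = (1-θ)*‖(1-s)•A + s•B - b‖ + θ*‖(1-t)•A + t•B - b‖ := by
          rw [norm_smul, norm_smul, Real.norm_of_nonneg (by linarith), Real.norm_of_nonneg hθ0]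
      _ ≤ (1-θ)*ε + θ*ε :=
          add_le_add (mul_le_mul_of_nonneg_left h1 (by linarith)) (mul_le_mul_of_nonneg_left h2 hθ0)
      _ = ε := by ring

set_option maxHeartbeats 1000000 in
theorem stmt17
    (k m n : ℕ) (hk : 1 ≤ k) (hm : 1 ≤ m) (hn : 1 ≤ n)
    (x y : ℕ → EuclideanSpace ℝ (Fin k)) (hx : x m = x 0) (hy : y n = y 0)
    (ε : ℝ) (hε : 0 ≤ ε)
    (Dε : Set (ℝ × ℝ)) (hDε : Dε = Dfree m n x y ε)
    (i j : ℕ) (hi1 : 1 ≤ i) (hi2 : i ≤ 2*m) (hj1 : 1 ≤ j) (hj2 : j ≤ n) :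
    ∃ I : Finset (Set ℝ),
      (∀ s ∈ I, s.OrdConnected) ∧
      (I : Set (Set ℝ)).PairwiseDisjoint id ∧
      ⋃₀ (I : Set (Set ℝ)) = {v : ℝ | ((i:ℝ), v) ∈ gUp m n Dε ∩ cellR i j} ∧
      (∀ s ∈ I, ∃ c : ℝ, ∀ v ∈ s, rUp m n Dε ((i:ℝ), v) = c) ∧
      I.card ≤ 4*m + 1 := by
  classical
  -- basic numeric facts
  have hi2R : (i:ℝ) ≤ 2*(m:ℝ) := by exact_mod_cast hi2
  have hi0 : (0:ℝ) ≤ (i:ℝ) := by positivity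
  have hj0 : (0:ℝ) ≤ (j:ℝ) - 1 := by
    have : (1:ℝ) ≤ (j:ℝ) := by exact_mod_cast hj1
    linarith
  have hjn : (j:ℝ) ≤ (n:ℝ) := by exact_mod_cast hj2
  -- the free space is inside the rectangle
  have hDsub : ∀ p : ℝ × ℝ, p ∈ Dε → p ∈ Dfull m n := by
    intro p hp; rw [hDε] at hp; exact hp.1
  have hDmem : ∀ p : ℝ × ℝ, p ∈ Dε ↔
      (p ∈ Dfull m n ∧ dist (fCurveExt m x p.1) (fCurve y p.2) ≤ ε) := by
    intro p; rw [hDε]; exact Iff.rfl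
  have hfull : ∀ p : ℝ × ℝ, p ∈ Dfull m n ↔
      (0 ≤ p.1 ∧ p.1 ≤ 2*(m:ℝ) ∧ 0 ≤ p.2 ∧ p.2 ≤ (n:ℝ)) := by
    intro p
    simp only [Dfull, mem_prod, mem_Icc]; tauto
  -- vertical convexity of the free space on the segment R_ij
  have hvert : ∀ v1 v3 v : ℝ, v1 ∈ Icc ((j:ℝ)-1) (j:ℝ) → v3 ∈ Icc ((j:ℝ)-1) (j:ℝ) →
      ((i:ℝ), v1) ∈ Dε → ((i:ℝ), v3) ∈ Dε → v1 ≤ v → v ≤ v3 → ((i:ℝ), v) ∈ Dε := by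
    intro v1 v3 v hv1 hv3 h1 h3 hle1 hle3
    have hv : v ∈ Icc ((j:ℝ)-1) (j:ℝ) := ⟨le_trans hv1.1 hle1, le_trans hle3 hv3.2⟩
    rw [hDmem]
    refine ⟨(hfull _).2 ⟨hi0, hi2R, le_trans hj0 hv.1, le_trans hv.2 hjn⟩, ?_⟩
    have hd1 : dist (fCurveExt m x (i:ℝ)) (fCurve y v1) ≤ ε := ((hDmem _).1 h1).2
    have hd3 : dist (fCurveExt m x (i:ℝ)) (fCurve y v3) ≤ ε := ((hDmem _).1 h3).2
    show dist (fCurveExt m x (i:ℝ)) (fCurve y v) ≤ ε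
    rw [fCurve_affine y j hj1 v hv, dist_comm, dist_eq_norm]
    rw [fCurve_affine y j hj1 v1 hv1, dist_comm, dist_eq_norm] at hd1
    rw [fCurve_affine y j hj1 v3 hv3, dist_comm, dist_eq_norm] at hd3
    exact seg_convex _ _ _ ε _ _ _ (by linarith) (by linarith) hd1 hd3
  -- the per-cell top free sets
  set T : ℕ → Set ℝ := fun c => {u : ℝ | u ∈ Icc ((c:ℝ)-1) (c:ℝ) ∧ (u, (n:ℝ)) ∈ Dε}
    with hT
  have htopconv : ∀ c : ℕ, 1 ≤ c → c ≤ 2*m → ∀ u1 u3 u : ℝ,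
      u1 ∈ T c → u3 ∈ T c → u1 ≤ u → u ≤ u3 → u ∈ T c := by
    intro c hc1 hc2 u1 u3 u h1 h3 hle1 hle3
    obtain ⟨A, B, hAB⟩ := fCurveExt_affine m hm x hx c hc1 hc2
    have hu : u ∈ Icc ((c:ℝ)-1) (c:ℝ) := ⟨le_trans h1.1.1 hle1, le_trans hle3 h3.1.2⟩
    refine ⟨hu, ?_⟩
    rw [hDmem]
    have hc0 : (0:ℝ) ≤ (c:ℝ)-1 := by
      have : (1:ℝ) ≤ (c:ℝ) := by exact_mod_cast hc1
      linarith
    have hc2R : (c:ℝ) ≤ 2*(m:ℝ) := by exact_mod_cast hc2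
    refine ⟨(hfull _).2 ⟨le_trans hc0 hu.1, le_trans hu.2 hc2R, by positivity, le_refl _⟩, ?_⟩
    have hd1 : dist (fCurveExt m x u1) (fCurve y (n:ℝ)) ≤ ε := ((hDmem _).1 h1.2).2
    have hd3 : dist (fCurveExt m x u3) (fCurve y (n:ℝ)) ≤ ε := ((hDmem _).1 h3.2).2
    show dist (fCurveExt m x u) (fCurve y (n:ℝ)) ≤ ε
    rw [hAB u hu, dist_eq_norm]
    rw [hAB u1 h1.1, dist_eq_norm] at hd1
    rw [hAB u3 h3.1, dist_eq_norm] at hd3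
    exact seg_convex _ _ _ ε _ _ _ (by linarith) (by linarith) hd1 hd3
  have htopsup : ∀ c : ℕ, 1 ≤ c → c ≤ 2*m → (T c).Nonempty → sSup (T c) ∈ T c := by
    intro c hc1 hc2 hne
    obtain ⟨A, B, hAB⟩ := fCurveExt_affine m hm x hx c hc1 hc2
    have hc0 : (0:ℝ) ≤ (c:ℝ)-1 := by
      have : (1:ℝ) ≤ (c:ℝ) := by exact_mod_cast hc1
      linarith
    have hc2R : (c:ℝ) ≤ 2*(m:ℝ) := by exact_mod_cast hc2
    have hTeq : T c = Icc ((c:ℝ)-1) (c:ℝ) ∩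
        {u : ℝ | ‖(1 - (u - ((c:ℝ)-1))) • A + (u - ((c:ℝ)-1)) • B - fCurve y (n:ℝ)‖ ≤ ε} := by
      ext u
      simp only [hT, mem_setOf_eq, mem_inter_iff]
      constructor
      · rintro ⟨hu, hD⟩
        refine ⟨hu, ?_⟩
        have hd : dist (fCurveExt m x u) (fCurve y (n:ℝ)) ≤ ε := ((hDmem _).1 hD).2
        rwa [hAB u hu, dist_eq_norm] at hd
      · rintro ⟨hu, hnorm⟩
        refine ⟨hu, ?_⟩
        rw [hDmem]
        refine ⟨(hfull _).2 ⟨le_trans hc0 hu.1, le_trans hu.2 hc2R, by positivity, le_refl _⟩, ?_⟩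
        show dist (fCurveExt m x u) (fCurve y (n:ℝ)) ≤ ε
        rw [hAB u hu, dist_eq_norm]
        exact hnorm
    have hcomp : IsCompact (T c) := by
      rw [hTeq]
      apply isCompact_Icc.inter_right
      apply isClosed_le _ continuous_const
      fun_prop
    exact hcomp.sSup_mem hne
  have hTbdd : ∀ c : ℕ, BddAbove (T c) := fun c => ⟨(c:ℝ), fun u hu => hu.1.2⟩
  -- the reach sets
  set R : ℝ → Set ℝ := fun v =>
    {u : ℝ | u ∈ Icc (0:ℝ) (2*(m:ℝ)) ∧ Reach Dε ((i:ℝ), v) (u, (n:ℝ))} with hR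
  have hRbdd : ∀ v, BddAbove (R v) := fun v => ⟨2*(m:ℝ), fun u hu => hu.1.2⟩
  have hrUp : ∀ v, rUp m n Dε ((i:ℝ), v) = sSup (R v) := fun v => rfl
  -- extension along the top boundary
  have hext : ∀ (v : ℝ) (c : ℕ), 1 ≤ c → c ≤ 2*m → ∀ u' : ℝ, u' ∈ R v →
      u' ∈ Icc ((c:ℝ)-1) (c:ℝ) → sSup (T c) ∈ R v ∧ u' ≤ sSup (T c) := by
    intro v c hc1 hc2 u' hu' huIcc
    have hc0' : (0:ℝ) ≤ (c:ℝ)-1 := by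
      have : (1:ℝ) ≤ (c:ℝ) := by exact_mod_cast hc1
      linarith
    have hc2R' : (c:ℝ) ≤ 2*(m:ℝ) := by exact_mod_cast hc2
    obtain ⟨γ, hγ, hpγ, hqγ⟩ := hu'.2
    have huT : u' ∈ T c := ⟨huIcc, hγ.1 hqγ⟩
    have hsupT := htopsup c hc1 hc2 ⟨u', huT⟩
    have hle : u' ≤ sSup (T c) := le_csSup (hTbdd c) huT
    have hHsub : ∀ w ∈ Icc u' (sSup (T c)), (w, (n:ℝ)) ∈ Dε := by
      intro w hw
      exact (htopconv c hc1 hc2 u' (sSup (T c)) w huT hsupT hw.1 hw.2).2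
    have hH := monPath_horiz u' (sSup (T c)) (n:ℝ) hle hHsub
    have hcross : ∀ p ∈ γ, ∀ q ∈ Icc u' (sSup (T c)) ×ˢ {(n:ℝ)},
        (p.1 - q.1) * (p.2 - q.2) ≥ 0 := by
      intro p hp q hq
      have hq2 : q.2 = (n:ℝ) := hq.2
      have hp2 : p.2 ≤ (n:ℝ) := ((hfull p).1 (hDsub p (hγ.1 hp))).2.2.2
      rcases monPath_chain hγ hqγ hp with h | h
      · have hpn : p.2 = (n:ℝ) := le_antisymm hp2 h.2
        rw [hpn, hq2]
        simp
      · have h1 : p.1 - q.1 ≤ 0 := by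
          have := h.1
          have := hq.1.1
          have := (h.1 : p.1 ≤ u')
          linarith
        have h2 : p.2 - q.2 ≤ 0 := by
          have := h.2
          rw [hq2]
          linarith
        nlinarith [h1, h2]
    have hmemH : (u', (n:ℝ)) ∈ Icc u' (sSup (T c)) ×ˢ {(n:ℝ)} := ⟨⟨le_rfl, hle⟩, rfl⟩
    have hunion := monPath_union hγ hH hqγ hmemH hcross
    refine ⟨⟨⟨le_trans hc0' hsupT.1.1, le_trans hsupT.1.2 hc2R'⟩, ?_⟩, hle⟩
    · exact ⟨_, hunion, Or.inl hpγ, Or.inr ⟨⟨hle, le_rfl⟩, rfl⟩⟩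
  -- the supremum of the reach set is the supremum of some top cell free set
  have hkey : ∀ v : ℝ, (R v).Nonempty →
      ∃ c : ℕ, 1 ≤ c ∧ c ≤ 2*m ∧ sSup (R v) = sSup (T c) := by
    intro v hne
    obtain ⟨u0, hu0⟩ := hne
    have hbdd := hRbdd v
    have hs0 : (0:ℝ) ≤ sSup (R v) := le_trans hu0.1.1 (le_csSup hbdd hu0)
    rcases eq_or_lt_of_le hs0 with h0 | h0
    · have hu00 : u0 = 0 := le_antisymm (h0 ▸ le_csSup hbdd hu0) hu0.1.1
      refine ⟨1, le_refl 1, by omega, ?_⟩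
      have h01 : u0 ∈ Icc (((1:ℕ):ℝ)-1) ((1:ℕ):ℝ) := by
        rw [hu00]; norm_num
      obtain ⟨hmem, hle⟩ := hext v 1 le_rfl (by omega) u0 hu0 h01
      have hle2 : sSup (T 1) ≤ sSup (R v) := le_csSup hbdd hmem
      have h2 : (0:ℝ) ≤ sSup (T 1) := by rw [← hu00]; exact hle
      exact le_antisymm (h0 ▸ h2) hle2 |>.symm ▸ (le_antisymm (le_trans hle2 (h0 ▸ le_refl _)) (h0 ▸ h2)).symm ▸ (le_antisymm hle2 (h0 ▸ h2)).symm
    · set c := ⌈sSup (R v)⌉₊ with hcdef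
      have hc1 : 1 ≤ c := Nat.one_le_iff_ne_zero.2 (by
        intro hz
        have := Nat.ceil_eq_zero.1 hz
        linarith)
      have hsle : sSup (R v) ≤ 2*(m:ℝ) := csSup_le ⟨u0, hu0⟩ (fun u hu => hu.1.2)
      have hc2 : c ≤ 2*m := Nat.ceil_le.2 (by push_cast; exact hsle)
      have hupp : sSup (R v) ≤ (c:ℝ) := Nat.le_ceil _
      have hlow : (c:ℝ) - 1 < sSup (R v) := by
        have := Nat.ceil_lt_add_one hs0
        rw [← hcdef] at this
        linarith
      obtain ⟨u', hu', hlt⟩ := exists_lt_of_lt_csSup ⟨u0, hu0⟩ hlow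
      have hu'le : u' ≤ sSup (R v) := le_csSup hbdd hu'
      obtain ⟨hmem, hle⟩ := hext v c hc1 hc2 u' hu' ⟨hlt.le, le_trans hu'le hupp⟩
      refine ⟨c, hc1, hc2, le_antisymm ?_ (le_csSup hbdd hmem)⟩
      by_contra hcon
      push_neg at hcon
      obtain ⟨u'', hu'', hlt2⟩ := exists_lt_of_lt_csSup ⟨u0, hu0⟩ hcon
      have hfin : u'' ≤ sSup (T c) :=
        (hext v c hc1 hc2 u'' hu'' ⟨by linarith, le_trans (le_csSup hbdd hu'') hupp⟩).2
      linarith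
  -- lifting reachability downwards along the segment R_ij
  have hlift : ∀ v2 v3 : ℝ, v2 ∈ Icc ((j:ℝ)-1) (j:ℝ) → v3 ∈ Icc ((j:ℝ)-1) (j:ℝ) →
      v2 ≤ v3 → ((i:ℝ), v2) ∈ Dε → ((i:ℝ), v3) ∈ Dε → ∀ u' : ℝ, u' ∈ R v3 →
      (u' ∈ R v2 ∨ ((i:ℝ) ∈ R v2 ∧ u' ≤ (i:ℝ))) := by
    intro v2 v3 hv2 hv3 hle h2 h3 u' hu'
    obtain ⟨γ, hγ, hpγ, hqγ⟩ := hu'.2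
    have hsegsub : ∀ w ∈ Icc v2 v3, ((i:ℝ), w) ∈ Dε :=
      fun w hw => hvert v2 v3 w hv2 hv3 h2 h3 hw.1 hw.2
    have hseg := monPath_vert v2 v3 (i:ℝ) hle hsegsub
    have hmem2 : ((i:ℝ), v2) ∈ ({(i:ℝ)} : Set ℝ) ×ˢ Icc v2 v3 := ⟨rfl, le_rfl, hle⟩
    have hmem3 : ((i:ℝ), v3) ∈ ({(i:ℝ)} : Set ℝ) ×ˢ Icc v2 v3 := ⟨rfl, hle, le_rfl⟩
    rcases monPath_chain hγ hpγ hqγ with hch | hch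
    · left
      have hγ' := monPath_inter_Ici hγ hpγ
      have hcross : ∀ p ∈ ({(i:ℝ)} : Set ℝ) ×ˢ Icc v2 v3, ∀ q ∈ γ ∩ Ici ((i:ℝ), v3),
          (p.1 - q.1) * (p.2 - q.2) ≥ 0 := by
        rintro p ⟨hp1, hp2⟩ q ⟨-, hq⟩
        rw [mem_singleton_iff] at hp1
        have hq1 : (i:ℝ) ≤ q.1 := hq.1
        have hq2 : v3 ≤ q.2 := hq.2
        have e1 : p.1 - q.1 ≤ 0 := by rw [hp1]; linarith
        have e2 : p.2 - q.2 ≤ 0 := by linarith [hp2.2]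
        nlinarith [e1, e2]
      have hu := monPath_union hseg hγ' hmem3 ⟨hpγ, self_mem_Ici⟩ hcross
      exact ⟨hu'.1, _, hu, Or.inl hmem2, Or.inr ⟨hqγ, hch⟩⟩
    · right
      have hv3n : v3 = (n:ℝ) := le_antisymm (le_trans hv3.2 hjn) hch.2
      refine ⟨⟨⟨hi0, hi2R⟩, ({(i:ℝ)} : Set ℝ) ×ˢ Icc v2 v3, hseg, hmem2, ?_⟩, hch.1⟩
      rw [← hv3n]
      exact hmem3
  -- the set to be partitioned
  set S : Set ℝ := {v : ℝ | ((i:ℝ), v) ∈ gUp m n Dε ∩ cellR i j} with hS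
  have hSmem : ∀ v : ℝ, v ∈ S ↔
      (((i:ℝ), v) ∈ Dε ∧ (∃ q ∈ Tside m n, Reach Dε ((i:ℝ), v) q) ∧
        v ∈ Icc ((j:ℝ)-1) (j:ℝ)) := by
    intro v
    simp only [hS, mem_setOf_eq, mem_inter_iff, gUp, mem_sep_iff, cellR, mem_prod,
      mem_singleton_iff, true_and, and_assoc]
    try tauto
  have hSR : ∀ v ∈ S, (R v).Nonempty := by
    intro v hv
    obtain ⟨hD, ⟨q, hqT, hreach⟩, hcell⟩ := (hSmem v).1 hv
    obtain ⟨hq1, hq2⟩ := hqT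
    rw [mem_singleton_iff] at hq2
    refine ⟨q.1, hq1, ?_⟩
    have hqe : (q.1, (n:ℝ)) = q := Prod.ext rfl hq2.symm
    rw [hqe]
    exact hreach
  have hSord : ∀ v1 v3 : ℝ, v1 ∈ S → v3 ∈ S → ∀ v : ℝ, v1 ≤ v → v ≤ v3 → v ∈ S := by
    intro v1 v3 h1 h3 v hle1 hle3
    obtain ⟨hD1, hT1, hc1⟩ := (hSmem v1).1 h1
    obtain ⟨hD3, hT3, hc3⟩ := (hSmem v3).1 h3
    have hcv : v ∈ Icc ((j:ℝ)-1) (j:ℝ) := ⟨le_trans hc1.1 hle1, le_trans hle3 hc3.2⟩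
    have hDv : ((i:ℝ), v) ∈ Dε := hvert v1 v3 v hc1 hc3 hD1 hD3 hle1 hle3
    obtain ⟨u', hu'⟩ := hSR v3 h3
    rcases hlift v v3 hcv hc3 hle3 hDv hD3 u' hu' with h | h
    · exact (hSmem v).2 ⟨hDv, ⟨(u', (n:ℝ)), ⟨h.1, rfl⟩, h.2⟩, hcv⟩
    · exact (hSmem v).2 ⟨hDv, ⟨((i:ℝ), (n:ℝ)), ⟨⟨hi0, hi2R⟩, rfl⟩, h.1.2⟩, hcv⟩
  have hanti : ∀ v2 v3 : ℝ, v2 ∈ S → v3 ∈ S → v2 ≤ v3 → sSup (R v3) ≤ sSup (R v2) := by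
    intro v2 v3 h2 h3 hle
    apply csSup_le (hSR v3 h3)
    intro u' hu'
    obtain ⟨hD2, -, hc2⟩ := (hSmem v2).1 h2
    obtain ⟨hD3, -, hc3⟩ := (hSmem v3).1 h3
    rcases hlift v2 v3 hc2 hc3 hle hD2 hD3 u' hu' with h | h
    · exact le_csSup (hRbdd v2) h
    · exact le_trans h.2 (le_csSup (hRbdd v2) h.1)
  -- assembling the partition
  refine ⟨(Finset.Icc 1 (2*m)).image
    (fun c => {v : ℝ | v ∈ S ∧ sSup (R v) = sSup (T c)}), ?_, ?_, ?_, ?_, ?_⟩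
  · rintro s hs
    obtain ⟨c, hc, rfl⟩ := Finset.mem_image.1 hs
    rw [Set.ordConnected_iff]
    intro v1 h1 v3 h3 hle v hv
    have hvS : v ∈ S := hSord v1 v3 h1.1 h3.1 v hv.1 hv.2
    refine ⟨hvS, le_antisymm ?_ ?_⟩
    · rw [← h1.2]; exact hanti v1 v h1.1 hvS hv.1
    · rw [← h3.2]; exact hanti v v3 hvS h3.1 hv.2
  · intro s hs t ht hst
    obtain ⟨c, hc, rfl⟩ := Finset.mem_image.1 (Finset.mem_coe.1 hs)
    obtain ⟨c', hc', rfl⟩ := Finset.mem_image.1 (Finset.mem_coe.1 ht)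
    rw [Function.onFun, id, id, disjoint_left]
    intro v hv hv'
    exact hst (by rw [show sSup (T c) = sSup (T c') from hv.2 ▸ hv'.2])
  · ext v
    simp only [mem_sUnion, Finset.mem_coe, Finset.mem_image, Finset.mem_Icc]
    constructor
    · rintro ⟨s, ⟨c, hc, rfl⟩, hv⟩
      exact hv.1
    · intro hv
      obtain ⟨c, hc1, hc2, hcs⟩ := hkey v (hSR v hv)
      exact ⟨_, ⟨c, ⟨hc1, hc2⟩, rfl⟩, hv, hcs⟩
  · rintro s hs
    obtain ⟨c, hc, rfl⟩ := Finset.mem_image.1 hs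
    exact ⟨sSup (T c), fun v hv => by rw [hrUp]; exact hv.2⟩
  · refine le_trans Finset.card_image_le ?_
    rw [Nat.card_Icc]
    omega
end
end

section
/- For each i ∈ {1,…,2m} and j ∈ {1,…,n}, there exists a partition I_↓(i,j) of the set g_↓ ∩ T_ij into pairwise disjoint intervals such that: there is at most one interval int ∈ I_↓(i,j) on which r_↓(u,j) = u for all (u,j) ∈ int; the pointer r_↓ is constant on every other interval of I_↓(i,j); and |I_↓(i,j)| ≤ 2n + 1. -/
open Set

noncomputable section

namespace Stmt18Aux

/-- symmetric product positivity -/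
lemma mono_symm {p q : ℝ × ℝ} (h : (p.1 - q.1) * (p.2 - q.2) ≥ 0) :
    (q.1 - p.1) * (q.2 - p.2) ≥ 0 := by nlinarith

lemma coord_le {γ : Set (ℝ × ℝ)}
    (hm : ∀ p ∈ γ, ∀ q ∈ γ, (p.1 - q.1) * (p.2 - q.2) ≥ 0)
    {p q : ℝ × ℝ} (hp : p ∈ γ) (hq : q ∈ γ) (h : p.1 + p.2 ≤ q.1 + q.2) :
    p.1 ≤ q.1 ∧ p.2 ≤ q.2 := by
  have h1 := hm p hp q hq
  constructor <;> nlinarith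

lemma phi_inj {γ : Set (ℝ × ℝ)}
    (hm : ∀ p ∈ γ, ∀ q ∈ γ, (p.1 - q.1) * (p.2 - q.2) ≥ 0)
    {p q : ℝ × ℝ} (hp : p ∈ γ) (hq : q ∈ γ) (h : p.1 + p.2 = q.1 + q.2) :
    p = q := by
  have h1 := coord_le hm hp hq h.le
  have h2 := coord_le hm hq hp h.ge
  have : p.1 = q.1 := le_antisymm h1.1 h2.1
  have : p.2 = q.2 := le_antisymm h1.2 h2.2
  exact Prod.ext ‹p.1 = q.1› ‹p.2 = q.2›

/-- Truncation of a monotone connected set by a φ-levelset is connected. -/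
lemma trunc_conn {γ : Set (ℝ × ℝ)} (hconn : IsConnected γ)
    (hm : ∀ p ∈ γ, ∀ q ∈ γ, (p.1 - q.1) * (p.2 - q.2) ≥ 0)
    (T : Set ℝ) (hT : T.OrdConnected)
    (hne : ({p ∈ γ | p.1 + p.2 ∈ T}).Nonempty) :
    IsConnected {p ∈ γ | p.1 + p.2 ∈ T} := by
  classical
  set φ : ℝ × ℝ → ℝ := fun p => p.1 + p.2 with hφ
  have hφc : Continuous φ := by fun_prop
  set S₀ : Set ℝ := φ '' γ with hS₀
  let ψ : ℝ → ℝ × ℝ := fun t => if h : ∃ p, p ∈ γ ∧ φ p = t then h.choose else (0, 0)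
  have hψ : ∀ t ∈ S₀, ψ t ∈ γ ∧ φ (ψ t) = t := by
    intro t ht
    obtain ⟨p, hp, hpt⟩ := ht
    have hex : ∃ p, p ∈ γ ∧ φ p = t := ⟨p, hp, hpt⟩
    simp only [ψ, dif_pos hex]
    exact hex.choose_spec
  have hψeq : ∀ p ∈ γ, ψ (φ p) = p := by
    intro p hp
    have h1 := hψ (φ p) ⟨p, hp, rfl⟩
    exact phi_inj hm h1.1 hp h1.2
  have hcont : ContinuousOn ψ S₀ := by
    rw [Metric.continuousOn_iff]
    intro t ht ε hε
    refine ⟨ε, hε, fun t' ht' hd => ?_⟩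
    have h1 := hψ t ht
    have h2 := hψ t' ht'
    rw [Prod.dist_eq]
    have key : ∀ a b : ℝ × ℝ, a ∈ γ → b ∈ γ → φ a ≤ φ b →
        dist a.1 b.1 ≤ φ b - φ a ∧ dist a.2 b.2 ≤ φ b - φ a := by
      intro a b ha hb hab
      obtain ⟨hc1, hc2⟩ := coord_le hm ha hb hab
      rw [Real.dist_eq, Real.dist_eq, abs_sub_comm, abs_of_nonneg (by linarith),
        abs_sub_comm, abs_of_nonneg (by linarith)]
      constructor <;> simp only [φ] <;> linarith
    rcases le_total t t' with hle | hle
    · obtain ⟨k1, k2⟩ := key _ _ h1.1 h2.1 (by rw [h1.2, h2.2]; exact hle)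
      rw [Real.dist_eq] at hd
      rw [h1.2, h2.2] at k1 k2
      rw [dist_comm (ψ t').1, dist_comm (ψ t').2]
      exact max_lt (lt_of_le_of_lt k1 (by rw [abs_sub_comm] at hd; nlinarith [le_abs_self (t - t'), neg_abs_le (t - t'), abs_nonneg (t-t')]))
        (lt_of_le_of_lt k2 (by rw [abs_sub_comm] at hd; nlinarith [le_abs_self (t - t'), neg_abs_le (t - t')]))
    · obtain ⟨k1, k2⟩ := key _ _ h2.1 h1.1 (by rw [h1.2, h2.2]; exact hle)
      rw [Real.dist_eq] at hd
      rw [h1.2, h2.2] at k1 k2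
      exact max_lt (lt_of_le_of_lt k1 (by nlinarith [le_abs_self (t' - t), neg_abs_le (t' - t)]))
        (lt_of_le_of_lt k2 (by nlinarith [le_abs_self (t' - t), neg_abs_le (t' - t)]))
  have hset : {p ∈ γ | φ p ∈ T} = ψ '' (S₀ ∩ T) := by
    ext p
    constructor
    · rintro ⟨hp, hpT⟩
      exact ⟨φ p, ⟨⟨p, hp, rfl⟩, hpT⟩, hψeq p hp⟩
    · rintro ⟨t, ⟨htS, htT⟩, rfl⟩
      obtain ⟨h1, h2⟩ := hψ t htS
      exact ⟨h1, by rw [h2]; exact htT⟩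
  rw [hset]
  have hS₀pc : IsPreconnected S₀ := hconn.isPreconnected.image φ hφc.continuousOn
  have hST : IsPreconnected (S₀ ∩ T) := by
    rw [isPreconnected_iff_ordConnected] at hS₀pc ⊢
    exact hS₀pc.inter hT
  refine ⟨?_, hST.image ψ (hcont.mono inter_subset_left)⟩
  obtain ⟨p, hp, hpT⟩ := hne
  exact ⟨p, ⟨φ p, ⟨⟨p, hp, rfl⟩, hpT⟩, hψeq p hp⟩⟩

end Stmt18Aux
namespace Stmt18Aux

variable {k : ℕ}

/-- affine formula for `fCurve` on `[c-1,c]`. -/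
lemma affCurve (x : ℕ → EuclideanSpace ℝ (Fin k)) {c : ℕ} (hc : 1 ≤ c) {t : ℝ}
    (h1 : (c:ℝ) - 1 ≤ t) (h2 : t ≤ c) :
    fCurve x t = ((c:ℝ) - t) • x (c-1) + (t - ((c:ℝ)-1)) • x c := by
  rcases eq_or_lt_of_le h2 with he | hlt
  · subst he
    have hfl : ⌊(c:ℝ)⌋ = (c:ℤ) := by exact_mod_cast Int.floor_natCast c
    have hfr : Int.fract ((c:ℝ)) = 0 := by
      rw [Int.fract, hfl]; push_cast; ring
    simp only [fCurve, hfl, hfr, Int.toNat_natCast]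
    rw [sub_self, zero_smul, sub_sub_cancel, one_smul, sub_zero, one_smul, zero_smul, add_zero,
      zero_add]
  · have hfl : ⌊t⌋ = (c:ℤ) - 1 := by
      rw [Int.floor_eq_iff]
      constructor
      · push_cast; linarith
      · push_cast; linarith
    have htn : ⌊t⌋.toNat = c - 1 := by omega
    have htn1 : c - 1 + 1 = c := by omega
    have hfr : Int.fract t = t - ((c:ℝ) - 1) := by
      rw [Int.fract, hfl]; push_cast; ring
    simp only [fCurve, htn, htn1, hfr]
    congr 1
    congr 1
    ring

/-- affine formula for `fCurveExt` on `[i'-1,i']`, `1 ≤ i' ≤ 2m`. -/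
lemma affExt (m : ℕ) (x : ℕ → EuclideanSpace ℝ (Fin k)) (hx : x m = x 0)
    {i' : ℕ} (h1 : 1 ≤ i') (h2 : i' ≤ 2*m) :
    ∃ P Q : EuclideanSpace ℝ (Fin k), ∀ u : ℝ, (i':ℝ) - 1 ≤ u → u ≤ i' →
      fCurveExt m x u = ((i':ℝ) - u) • P + (u - ((i':ℝ)-1)) • Q := by
  by_cases him : i' ≤ m
  · refine ⟨x (i'-1), x i', fun u hu1 hu2 => ?_⟩
    have hum : u ≤ (m:ℝ) := le_trans hu2 (by exact_mod_cast him)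
    rw [fCurveExt, if_pos hum]
    exact affCurve x h1 hu1 hu2
  · push_neg at him
    refine ⟨x (i'-m-1), x (i'-m), fun u hu1 hu2 => ?_⟩
    by_cases hum : u ≤ (m:ℝ)
    · have hi'm : i' = m + 1 := by
        have hA : (i':ℝ) - 1 ≤ (m:ℝ) := le_trans hu1 hum
        have : i' ≤ m + 1 := by exact_mod_cast (by linarith : (i':ℝ) ≤ (m:ℝ) + 1)
        omega
      have hu : u = (m:ℝ) := by
        apply le_antisymm hum
        rw [hi'm] at hu1; push_cast at hu1; linarith
      rw [fCurveExt, if_pos hum, hu]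
      have hm1 : 1 ≤ m := by omega
      rw [affCurve x hm1 (t := (m:ℝ)) (by push_cast; linarith) le_rfl]
      have e1 : i' - m - 1 = 0 := by omega
      have e2 : i' - m = 1 := by omega
      rw [e1, e2, hi'm, sub_self, zero_smul, zero_add, hx]
      push_cast
      rw [sub_sub_cancel]
      have c1 : (m:ℝ) + 1 - m = 1 := by ring
      have c2 : (m:ℝ) - (m + 1 - 1) = 0 := by ring
      rw [c1, c2]; simp
    · push_neg at hum
      rw [fCurveExt, if_neg (not_le.mpr hum)]
      have hc : 1 ≤ i' - m := by omega
      have hcast : ((i' - m : ℕ) : ℝ) = (i':ℝ) - m := by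
        push_cast [Nat.cast_sub (le_of_lt him)]; ring
      rw [affCurve x hc (t := u - m) (by rw [hcast]; linarith) (by rw [hcast]; linarith)]
      rw [hcast]
      congr 1
      · congr 1; ring
      · congr 1; ring

end Stmt18Aux
namespace Stmt18Aux

variable {k : ℕ}

section Geometry

variable (m n : ℕ) (x y : ℕ → EuclideanSpace ℝ (Fin k)) (ε : ℝ)

lemma Dfree_sub_full : Dfree m n x y ε ⊆ Dfull m n := fun _ hp => hp.1

/-- convexity of the free space within one cell. -/
lemma cell_convex (hx : x m = x 0) {i' l : ℕ} (hi'1 : 1 ≤ i') (hi'2 : i' ≤ 2*m)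
    (hl1 : 1 ≤ l) (hl2 : l ≤ n) :
    Convex ℝ (Dfree m n x y ε ∩ (Icc ((i':ℝ)-1) (i':ℝ) ×ˢ Icc ((l:ℝ)-1) (l:ℝ))) := by
  obtain ⟨P, Q, hPQ⟩ := affExt m x hx hi'1 hi'2
  rintro p ⟨⟨hpfull, hpd⟩, hpc⟩ q ⟨⟨hqfull, hqd⟩, hqc⟩ a b ha hb hab
  have hcell : Convex ℝ (Icc ((i':ℝ)-1) (i':ℝ) ×ˢ Icc ((l:ℝ)-1) (l:ℝ)) :=
    (convex_Icc _ _).prod (convex_Icc _ _)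
  have hfull : Convex ℝ (Dfull m n) := (convex_Icc _ _).prod (convex_Icc _ _)
  have hzc := hcell hpc hqc ha hb hab
  refine ⟨⟨hfull hpfull hqfull ha hb hab, ?_⟩, hzc⟩
  obtain ⟨hz1, hz2⟩ := hzc
  simp only [Prod.fst_add, Prod.snd_add, Prod.smul_fst, Prod.smul_snd, smul_eq_mul] at hz1 hz2 ⊢
  have hyaff : ∀ v : ℝ, (l:ℝ) - 1 ≤ v → v ≤ l →
      fCurve y v = ((l:ℝ) - v) • y (l-1) + (v - ((l:ℝ)-1)) • y l := fun v h1 h2 =>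
    affCurve y hl1 h1 h2
  have hp1 := hPQ p.1 hpc.1.1 hpc.1.2
  have hq1 := hPQ q.1 hqc.1.1 hqc.1.2
  have hz1' := hPQ _ hz1.1 hz1.2
  have hp2 := hyaff p.2 hpc.2.1 hpc.2.2
  have hq2 := hyaff q.2 hqc.2.1 hqc.2.2
  have hz2' := hyaff _ hz2.1 hz2.2
  rw [dist_eq_norm] at hpd hqd ⊢
  rw [hz1', hz2']
  have key : ((i':ℝ) - (a * p.1 + b * q.1)) • P + (a * p.1 + b * q.1 - ((i':ℝ)-1)) • Q -
      (((l:ℝ) - (a * p.2 + b * q.2)) • y (l-1) + (a * p.2 + b * q.2 - ((l:ℝ)-1)) • y l) =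
      a • (fCurveExt m x p.1 - fCurve y p.2) + b • (fCurveExt m x q.1 - fCurve y q.2) := by
    rw [hp1, hq1, hp2, hq2]
    have hab' : b = 1 - a := by linarith
    subst hab'
    match_scalars <;> ring
  rw [key]
  calc ‖a • (fCurveExt m x p.1 - fCurve y p.2) + b • (fCurveExt m x q.1 - fCurve y q.2)‖
      ≤ ‖a • (fCurveExt m x p.1 - fCurve y p.2)‖ + ‖b • (fCurveExt m x q.1 - fCurve y q.2)‖ :=
        norm_add_le _ _
    _ = a * ‖fCurveExt m x p.1 - fCurve y p.2‖ + b * ‖fCurveExt m x q.1 - fCurve y q.2‖ := by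
        rw [norm_smul, norm_smul, Real.norm_eq_abs, Real.norm_eq_abs, abs_of_nonneg ha,
          abs_of_nonneg hb]
    _ ≤ a * ε + b * ε := by
        apply add_le_add <;> apply mul_le_mul_of_nonneg_left <;> assumption
    _ = ε := by rw [← add_mul, hab, one_mul]

/-- the free space is closed. -/
lemma Dfree_closed (hx : x m = x 0) (hm : 1 ≤ m) (hn : 1 ≤ n) :
    IsClosed (Dfree m n x y ε) := by
  classical
  have haff : ∀ i' ∈ Finset.Icc 1 (2*m), ∃ P Q : EuclideanSpace ℝ (Fin k),
      ∀ u : ℝ, (i':ℝ) - 1 ≤ u → u ≤ i' →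
      fCurveExt m x u = ((i':ℝ) - u) • P + (u - ((i':ℝ)-1)) • Q := by
    intro i' hi'
    simp only [Finset.mem_Icc] at hi'
    exact affExt m x hx hi'.1 hi'.2
  choose! P Q hPQ using haff
  have hrep : Dfree m n x y ε = ⋃ i' ∈ Finset.Icc 1 (2*m), ⋃ l ∈ Finset.Icc 1 n,
      ((Icc ((i':ℝ)-1) (i':ℝ) ×ˢ Icc ((l:ℝ)-1) (l:ℝ)) ∩
        {p : ℝ × ℝ | ‖(((i':ℝ) - p.1) • P i' + (p.1 - ((i':ℝ)-1)) • Q i') -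
          ((((l:ℝ) - p.2) • y (l-1)) + (p.2 - ((l:ℝ)-1)) • y l)‖ ≤ ε}) := by
    ext p
    constructor
    · rintro ⟨⟨hp1, hp2⟩, hpd⟩
      obtain ⟨hp10, hp12m⟩ := hp1
      obtain ⟨hp20, hp2n⟩ := hp2
      -- choose the cell indices
      have h2m : 1 ≤ 2*m := by omega
      obtain ⟨i', hi'1, hi'2, hci1, hci2⟩ :
          ∃ i' : ℕ, 1 ≤ i' ∧ i' ≤ 2*m ∧ (i':ℝ) - 1 ≤ p.1 ∧ p.1 ≤ i' := by
        rcases lt_or_ge p.1 (2*(m:ℝ)) with hlt | hge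
        · refine ⟨⌊p.1⌋.toNat + 1, by omega, ?_, ?_, ?_⟩
          · have h1 : (⌊p.1⌋ : ℝ) ≤ p.1 := Int.floor_le _
            have h0 : 0 ≤ ⌊p.1⌋ := Int.floor_nonneg.mpr hp10
            have : (⌊p.1⌋ : ℝ) < 2*m := lt_of_le_of_lt h1 hlt
            have : ⌊p.1⌋ < 2*(m:ℤ) := by exact_mod_cast this
            omega
          · have h0 : 0 ≤ ⌊p.1⌋ := Int.floor_nonneg.mpr hp10
            have hcast : ((⌊p.1⌋.toNat : ℕ) : ℝ) = ((⌊p.1⌋ : ℤ) : ℝ) := by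
              exact_mod_cast Int.toNat_of_nonneg h0
            push_cast
            rw [hcast]
            linarith [Int.floor_le p.1]
          · have h0 : 0 ≤ ⌊p.1⌋ := Int.floor_nonneg.mpr hp10
            have hcast : ((⌊p.1⌋.toNat : ℕ) : ℝ) = ((⌊p.1⌋ : ℤ) : ℝ) := by
              exact_mod_cast Int.toNat_of_nonneg h0
            push_cast
            rw [hcast]
            linarith [Int.lt_floor_add_one p.1]
        · have hpe : p.1 = 2*(m:ℝ) := le_antisymm hp12m hge
          refine ⟨2*m, by omega, le_rfl, by push_cast [hpe]; linarith, by push_cast [hpe]; linarith⟩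
      obtain ⟨l, hl1, hl2, hcl1, hcl2⟩ :
          ∃ l : ℕ, 1 ≤ l ∧ l ≤ n ∧ (l:ℝ) - 1 ≤ p.2 ∧ p.2 ≤ l := by
        rcases lt_or_ge p.2 (n:ℝ) with hlt | hge
        · refine ⟨⌊p.2⌋.toNat + 1, by omega, ?_, ?_, ?_⟩
          · have h1 : (⌊p.2⌋ : ℝ) ≤ p.2 := Int.floor_le _
            have h0 : 0 ≤ ⌊p.2⌋ := Int.floor_nonneg.mpr hp20
            have : (⌊p.2⌋ : ℝ) < n := lt_of_le_of_lt h1 hlt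
            have : ⌊p.2⌋ < (n:ℤ) := by exact_mod_cast this
            omega
          · have h0 : 0 ≤ ⌊p.2⌋ := Int.floor_nonneg.mpr hp20
            have hcast : ((⌊p.2⌋.toNat : ℕ) : ℝ) = ((⌊p.2⌋ : ℤ) : ℝ) := by
              exact_mod_cast Int.toNat_of_nonneg h0
            push_cast
            rw [hcast]
            linarith [Int.floor_le p.2]
          · have h0 : 0 ≤ ⌊p.2⌋ := Int.floor_nonneg.mpr hp20
            have hcast : ((⌊p.2⌋.toNat : ℕ) : ℝ) = ((⌊p.2⌋ : ℤ) : ℝ) := by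
              exact_mod_cast Int.toNat_of_nonneg h0
            push_cast
            rw [hcast]
            linarith [Int.lt_floor_add_one p.2]
        · have hpe : p.2 = (n:ℝ) := le_antisymm hp2n hge
          exact ⟨n, hn, le_rfl, by rw [hpe]; linarith, by rw [hpe]⟩
      refine mem_biUnion (Finset.mem_Icc.mpr ⟨hi'1, hi'2⟩) (mem_biUnion (Finset.mem_Icc.mpr ⟨hl1, hl2⟩) ?_)
      refine ⟨⟨⟨hci1, hci2⟩, ⟨hcl1, hcl2⟩⟩, ?_⟩
      have e1 := hPQ i' (Finset.mem_Icc.mpr ⟨hi'1, hi'2⟩) p.1 hci1 hci2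
      have e2 := affCurve y hl1 hcl1 hcl2
      rw [dist_eq_norm, e1, e2] at hpd
      exact hpd
    · intro hp
      simp only [mem_iUnion] at hp
      obtain ⟨i', hi', l, hl, ⟨⟨hci, hcl⟩, hpd⟩⟩ := hp
      simp only [Finset.mem_Icc] at hi' hl
      have e1 := hPQ i' (Finset.mem_Icc.mpr hi') p.1 hci.1 hci.2
      have e2 := affCurve y hl.1 hcl.1 hcl.2
      refine ⟨⟨⟨?_, ?_⟩, ⟨?_, ?_⟩⟩, ?_⟩
      · have : (0:ℝ) ≤ (i':ℝ) - 1 := by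
          have : (1:ℝ) ≤ i' := by exact_mod_cast hi'.1
          linarith
        linarith [hci.1]
      · have : (i':ℝ) ≤ 2*m := by exact_mod_cast hi'.2
        linarith [hci.2]
      · have : (0:ℝ) ≤ (l:ℝ) - 1 := by
          have : (1:ℝ) ≤ l := by exact_mod_cast hl.1
          linarith
        linarith [hcl.1]
      · have : (l:ℝ) ≤ n := by exact_mod_cast hl.2
        linarith [hcl.2]
      · rw [dist_eq_norm, e1, e2]
        exact hpd
  rw [hrep]
  apply Set.Finite.isClosed_biUnion (Finset.finite_toSet _)
  intro i' _
  apply Set.Finite.isClosed_biUnion (Finset.finite_toSet _)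
  intro l _
  apply IsClosed.inter
  · exact (isClosed_Icc.preimage continuous_fst).inter (isClosed_Icc.preimage continuous_snd)
  · apply isClosed_le _ continuous_const
    apply Continuous.norm
    apply Continuous.sub
    · apply Continuous.add
      · exact ((continuous_const.sub continuous_fst).smul continuous_const)
      · exact ((continuous_fst.sub continuous_const).smul continuous_const)
    · apply Continuous.add
      · exact ((continuous_const.sub continuous_snd).smul continuous_const)
      · exact ((continuous_snd.sub continuous_const).smul continuous_const)

lemma Dfree_bounded : Bornology.IsBounded (Dfree m n x y ε) :=
  ((Metric.isBounded_Icc _ _).prod (Metric.isBounded_Icc _ _)).subset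
    (Dfree_sub_full m n x y ε)

end Geometry

end Stmt18Aux
namespace Stmt18Aux

variable {k : ℕ}

section Between

variable (m n : ℕ) (x y : ℕ → EuclideanSpace ℝ (Fin k)) (ε : ℝ)

lemma between_horiz (hx : x m = x 0) {i' l : ℕ} (hi'1 : 1 ≤ i') (hi'2 : i' ≤ 2*m)
    (hl1 : 1 ≤ l) (hl2 : l ≤ n) {a b c h : ℝ}
    (hac : (i':ℝ) - 1 ≤ a) (hbc : b ≤ (i':ℝ)) (hh1 : (l:ℝ) - 1 ≤ h) (hh2 : h ≤ (l:ℝ))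
    (haD : (a, h) ∈ Dfree m n x y ε) (hbD : (b, h) ∈ Dfree m n x y ε)
    (h1 : a ≤ c) (h2 : c ≤ b) : (c, h) ∈ Dfree m n x y ε := by
  have hab : a ≤ b := le_trans h1 h2
  have hseg : c ∈ segment ℝ a b := by rw [segment_eq_Icc hab]; exact ⟨h1, h2⟩
  obtain ⟨t1, t2, ht1, ht2, hsum, heq⟩ := hseg
  have key := cell_convex m n x y ε hx hi'1 hi'2 hl1 hl2
    (show ((a:ℝ), h) ∈ _ ∩ _ from ⟨haD, ⟨⟨hac, le_trans hab hbc⟩, ⟨hh1, hh2⟩⟩⟩)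
    (show ((b:ℝ), h) ∈ _ ∩ _ from ⟨hbD, ⟨⟨le_trans hac hab, hbc⟩, ⟨hh1, hh2⟩⟩⟩) ht1 ht2 hsum
  have : t1 • ((a:ℝ), h) + t2 • ((b:ℝ), h) = ((c:ℝ), h) := by
    ext
    · simpa using heq
    · simp only [Prod.fst_add, Prod.snd_add, Prod.smul_snd, smul_eq_mul]
      rw [← add_mul, hsum, one_mul]
  rw [this] at key
  exact key.1

lemma between_vert (hx : x m = x 0) {i' l : ℕ} (hi'1 : 1 ≤ i') (hi'2 : i' ≤ 2*m)
    (hl1 : 1 ≤ l) (hl2 : l ≤ n) {a b c u : ℝ}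
    (hu1 : (i':ℝ) - 1 ≤ u) (hu2 : u ≤ (i':ℝ)) (ha : (l:ℝ) - 1 ≤ a) (hb : b ≤ (l:ℝ))
    (haD : (u, a) ∈ Dfree m n x y ε) (hbD : (u, b) ∈ Dfree m n x y ε)
    (h1 : a ≤ c) (h2 : c ≤ b) : (u, c) ∈ Dfree m n x y ε := by
  have hab : a ≤ b := le_trans h1 h2
  have hseg : c ∈ segment ℝ a b := by rw [segment_eq_Icc hab]; exact ⟨h1, h2⟩
  obtain ⟨t1, t2, ht1, ht2, hsum, heq⟩ := hseg
  have key := cell_convex m n x y ε hx hi'1 hi'2 hl1 hl2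
    (show ((u:ℝ), a) ∈ _ ∩ _ from ⟨haD, ⟨⟨hu1, hu2⟩, ⟨ha, le_trans hab hb⟩⟩⟩)
    (show ((u:ℝ), b) ∈ _ ∩ _ from ⟨hbD, ⟨⟨hu1, hu2⟩, ⟨le_trans ha hab, hb⟩⟩⟩) ht1 ht2 hsum
  have : t1 • ((u:ℝ), a) + t2 • ((u:ℝ), b) = ((u:ℝ), c) := by
    ext
    · simp only [Prod.fst_add, Prod.smul_fst, smul_eq_mul]
      rw [← add_mul, hsum, one_mul]
    · simpa using heq
  rw [this] at key
  exact key.1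

lemma reach_compact (hx : x m = x 0) (hm : 1 ≤ m) (hn : 1 ≤ n) {p q : ℝ × ℝ}
    (h : Reach (Dfree m n x y ε) p q) :
    ∃ γ, IsMonPath (Dfree m n x y ε) γ ∧ p ∈ γ ∧ q ∈ γ ∧ IsCompact γ := by
  obtain ⟨γ, ⟨hsub, hconn, hmono⟩, hp, hq⟩ := h
  refine ⟨closure γ, ⟨closure_minimal hsub (Dfree_closed m n x y ε hx hm hn),
    hconn.closure, ?_⟩, subset_closure hp, subset_closure hq, ?_⟩
  · intro p' hp' q' hq'
    have hA : IsClosed {z : (ℝ × ℝ) × (ℝ × ℝ) | 0 ≤ (z.1.1 - z.2.1) * (z.1.2 - z.2.2)} := by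
      apply isClosed_le continuous_const
      fun_prop
    have hsub2 : γ ×ˢ γ ⊆ {z : (ℝ × ℝ) × (ℝ × ℝ) | 0 ≤ (z.1.1 - z.2.1) * (z.1.2 - z.2.2)} := by
      rintro ⟨a, b⟩ ⟨ha, hb⟩
      exact hmono a ha b hb
    have := closure_minimal hsub2 hA
    rw [closure_prod_eq] at this
    exact this (Set.mk_mem_prod hp' hq')
  · exact Metric.isCompact_of_isClosed_isBounded isClosed_closure
      (((Dfree_bounded m n x y ε).subset hsub).closure)

/-- squeeze: a monotone path between `(w,b)` and `(w,0)` forces the vertical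
segment to be free. -/
lemma squeeze (hx : x m = x 0) (hm : 1 ≤ m) (hn : 1 ≤ n) {w b : ℝ} (hb : 0 < b)
    (h : Reach (Dfree m n x y ε) (w, b) (w, 0)) :
    ∀ v, 0 ≤ v → v ≤ b → (w, v) ∈ Dfree m n x y ε := by
  obtain ⟨γ, ⟨hsub, hconn, hmono⟩, hp, hq⟩ := h
  intro v hv0 hvb
  set δ : Set (ℝ × ℝ) := {p ∈ γ | p.1 + p.2 ∈ Icc w (w + b)} with hδ
  have hδconn : IsConnected δ := by
    apply trunc_conn hconn hmono _ ordConnected_Icc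
    exact ⟨(w, 0), hq, by constructor <;> simp <;> linarith⟩
  have hδ1 : ∀ p ∈ δ, p.1 = w := by
    rintro p ⟨hpγ, hpφ1, hpφ2⟩
    have h1 := hmono p hpγ (w, b) hp
    have h2 := hmono p hpγ (w, 0) hq
    simp only at h1 h2
    by_contra hne
    rcases lt_or_gt_of_ne hne with hlt | hgt
    · nlinarith
    · nlinarith
  have himg : IsPreconnected ((fun p : ℝ × ℝ => p.2) '' δ) :=
    hδconn.isPreconnected.image _ continuous_snd.continuousOn
  rw [isPreconnected_iff_ordConnected] at himg
  have h0m : (0:ℝ) ∈ (fun p : ℝ × ℝ => p.2) '' δ :=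
    ⟨(w, 0), ⟨hq, by constructor <;> simp <;> linarith⟩, rfl⟩
  have hbm : b ∈ (fun p : ℝ × ℝ => p.2) '' δ :=
    ⟨(w, b), ⟨hp, by constructor <;> simp <;> linarith⟩, rfl⟩
  have := himg.out h0m hbm ⟨hv0, hvb⟩
  obtain ⟨p, hpδ, hpv⟩ := this
  have : p = (w, v) := Prod.ext (hδ1 p hpδ) hpv
  rw [← this]
  exact hsub hpδ.1

end Between

end Stmt18Aux
namespace Stmt18Aux

variable {k : ℕ}

section Frame

variable (m n : ℕ) (x y : ℕ → EuclideanSpace ℝ (Fin k)) (ε : ℝ) (i j : ℕ)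

/-- the trace of `g↓` on the top side of the cell. -/
def Sset : Set ℝ := {u : ℝ | (u, (j:ℝ)) ∈ gDown m (Dfree m n x y ε) ∩ cellT i j}

/-- the column above the cell is free all the way down. -/
def colFree (u : ℝ) : Prop := ∀ v, 0 ≤ v → v ≤ (j:ℝ) → (u, v) ∈ Dfree m n x y ε

/-- the "diagonal" part. -/
def VSset : Set ℝ := {u ∈ Sset m n x y ε i j | colFree m n x y ε j u}

/-- bottom points reachable from `(u,j)`. -/
def Rset (u : ℝ) : Set ℝ :=
  {w : ℝ | w ∈ Icc (0:ℝ) (2*(m:ℝ)) ∧ Reach (Dfree m n x y ε) (u, (j:ℝ)) (w, (0:ℝ))}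

variable {m n x y ε i j}

lemma S_bounds {u : ℝ} (hu : u ∈ Sset m n x y ε i j) :
    ((i:ℝ) - 1 ≤ u ∧ u ≤ i) ∧ (u, (j:ℝ)) ∈ Dfree m n x y ε ∧
      ∃ q ∈ Bside m, Reach (Dfree m n x y ε) (u, (j:ℝ)) q := by
  obtain ⟨⟨hD, hq⟩, hIcc, -⟩ := hu
  exact ⟨hIcc, hD, hq⟩

lemma S_mem_of {u : ℝ} (h1 : (i:ℝ) - 1 ≤ u) (h2 : u ≤ i)
    (hD : (u, (j:ℝ)) ∈ Dfree m n x y ε)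
    (hq : ∃ q ∈ Bside m, Reach (Dfree m n x y ε) (u, (j:ℝ)) q) :
    u ∈ Sset m n x y ε i j :=
  ⟨⟨hD, hq⟩, ⟨h1, h2⟩, rfl⟩

lemma lineJ_free (hx : x m = x 0) (hi1 : 1 ≤ i) (hi2 : i ≤ 2*m) (hj1 : 1 ≤ j) (hj2 : j ≤ n)
    {u1 u2 c : ℝ} (h1 : u1 ∈ Sset m n x y ε i j) (h2 : u2 ∈ Sset m n x y ε i j)
    (hc1 : u1 ≤ c) (hc2 : c ≤ u2) : (c, (j:ℝ)) ∈ Dfree m n x y ε := by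
  obtain ⟨⟨hb1, -⟩, hD1, -⟩ := S_bounds h1
  obtain ⟨⟨-, hb2⟩, hD2, -⟩ := S_bounds h2
  exact between_horiz m n x y ε hx hi1 hi2 hj1 hj2 hb1 hb2 (by linarith) le_rfl hD1 hD2 hc1 hc2

lemma w_le_u (hj1 : 1 ≤ j) {u w : ℝ}
    (h : Reach (Dfree m n x y ε) (u, (j:ℝ)) (w, (0:ℝ))) : w ≤ u := by
  obtain ⟨γ, ⟨-, -, hmono⟩, hp, hq⟩ := h
  have := hmono (w, (0:ℝ)) hq (u, (j:ℝ)) hp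
  simp only at this
  have hj : (0:ℝ) < j := by exact_mod_cast hj1
  nlinarith

lemma reach_top_shift (hj1 : 1 ≤ j) {u1 c w : ℝ} (h1c : u1 ≤ c)
    (hseg : ∀ s, u1 ≤ s → s ≤ c → (s, (j:ℝ)) ∈ Dfree m n x y ε)
    (h : Reach (Dfree m n x y ε) (u1, (j:ℝ)) (w, (0:ℝ))) :
    Reach (Dfree m n x y ε) (c, (j:ℝ)) (w, (0:ℝ)) := by
  have hwle : w ≤ u1 := w_le_u hj1 h
  obtain ⟨γ, ⟨hsub, hconn, hmono⟩, hp, hq⟩ := h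
  have hjpos : (0:ℝ) < j := by exact_mod_cast hj1
  set γ₂ : Set (ℝ × ℝ) := {p ∈ γ | p.1 + p.2 ∈ Iic (u1 + j)} with hγ₂
  have hγ₂conn : IsConnected γ₂ := by
    apply trunc_conn hconn hmono _ ordConnected_Iic
    exact ⟨(u1, (j:ℝ)), hp, by simp [mem_Iic]⟩
  have hγ₂le : ∀ p ∈ γ₂, p.1 ≤ u1 ∧ p.2 ≤ (j:ℝ) := by
    rintro p ⟨hpγ, hpφ⟩
    exact coord_le hmono hpγ hp hpφ
  set seg : Set (ℝ × ℝ) := Icc u1 c ×ˢ {(j:ℝ)} with hsegdef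
  have hsegsub : seg ⊆ Dfree m n x y ε := by
    rintro ⟨s, v⟩ ⟨hs, hv⟩
    simp only [mem_singleton_iff] at hv
    subst hv
    exact hseg s hs.1 hs.2
  refine ⟨γ₂ ∪ seg, ⟨?_, ?_, ?_⟩, ?_, ?_⟩
  · exact union_subset (fun p hp' => hsub hp'.1) hsegsub
  · have hsegconn : IsConnected seg := by
      refine ⟨⟨(u1, (j:ℝ)), ⟨⟨le_rfl, h1c⟩, rfl⟩⟩, ?_⟩
      exact ((convex_Icc _ _).prod (convex_singleton _)).isPreconnected
    exact IsConnected.union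
      ⟨(u1, (j:ℝ)), ⟨hp, by simp [mem_Iic]⟩, ⟨⟨le_rfl, h1c⟩, rfl⟩⟩ hγ₂conn hsegconn
  · rintro p (hp2 | hpseg) q (hq2 | hqseg)
    · exact hmono p hp2.1 q hq2.1
    · obtain ⟨hA, hB⟩ := hγ₂le p hp2
      obtain ⟨⟨hq1, -⟩, hq2'⟩ := hqseg
      simp only [mem_singleton_iff] at hq2'
      have : p.1 - q.1 ≤ 0 := by linarith
      have : p.2 - q.2 ≤ 0 := by rw [hq2']; linarith
      nlinarith
    · obtain ⟨hA, hB⟩ := hγ₂le q hq2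
      obtain ⟨⟨hp1, -⟩, hp2'⟩ := hpseg
      simp only [mem_singleton_iff] at hp2'
      have : q.1 - p.1 ≤ 0 := by linarith
      have : q.2 - p.2 ≤ 0 := by rw [hp2']; linarith
      nlinarith
    · obtain ⟨-, hp2'⟩ := hpseg
      obtain ⟨-, hq2'⟩ := hqseg
      simp only [mem_singleton_iff] at hp2' hq2'
      rw [hp2', hq2', sub_self, mul_zero]
  · exact Or.inr ⟨⟨h1c, le_rfl⟩, rfl⟩
  · exact Or.inl ⟨hq, by simp only [mem_Iic]; linarith⟩

lemma S_ordconn (hx : x m = x 0) (hi1 : 1 ≤ i) (hi2 : i ≤ 2*m) (hj1 : 1 ≤ j) (hj2 : j ≤ n) :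
    (Sset m n x y ε i j).OrdConnected := by
  rw [Set.ordConnected_iff]
  intro u1 h1 u2 h2 hle c hc
  obtain ⟨⟨hb11, hb12⟩, hD1, q, hqB, hreach⟩ := S_bounds h1
  obtain ⟨⟨hb21, hb22⟩, hD2, -⟩ := S_bounds h2
  have hqeq : q = (q.1, (0:ℝ)) := by
    obtain ⟨-, hq2⟩ := hqB
    simp only [mem_singleton_iff] at hq2
    exact Prod.ext rfl hq2
  rw [hqeq] at hreach
  apply S_mem_of (by linarith [hc.1]) (by linarith [hc.2])
    (lineJ_free hx hi1 hi2 hj1 hj2 h1 h2 hc.1 hc.2)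
  refine ⟨(q.1, (0:ℝ)), by rw [← hqeq]; exact hqB, ?_⟩
  exact reach_top_shift hj1 hc.1 (fun s hs1 hs2 => lineJ_free hx hi1 hi2 hj1 hj2 h1 h2 hs1
    (le_trans hs2 hc.2)) hreach

lemma mono_R (hx : x m = x 0) (hi1 : 1 ≤ i) (hi2 : i ≤ 2*m) (hj1 : 1 ≤ j) (hj2 : j ≤ n)
    {u1 u2 : ℝ} (h1 : u1 ∈ Sset m n x y ε i j) (h2 : u2 ∈ Sset m n x y ε i j)
    (hle : u1 ≤ u2) : Rset m n x y ε j u1 ⊆ Rset m n x y ε j u2 := by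
  rintro w ⟨hwI, hwr⟩
  exact ⟨hwI, reach_top_shift hj1 hle
    (fun s hs1 hs2 => lineJ_free hx hi1 hi2 hj1 hj2 h1 h2 hs1 hs2) hwr⟩

lemma VS_ordconn (hx : x m = x 0) (hm : 1 ≤ m) (hn : 1 ≤ n)
    (hi1 : 1 ≤ i) (hi2 : i ≤ 2*m) (hj1 : 1 ≤ j) (hj2 : j ≤ n) :
    (VSset m n x y ε i j).OrdConnected := by
  rw [Set.ordConnected_iff]
  intro u1 h1 u2 h2 hle c hc
  obtain ⟨hS1, hcol1⟩ := h1
  obtain ⟨hS2, hcol2⟩ := h2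
  refine ⟨(S_ordconn hx hi1 hi2 hj1 hj2).out hS1 hS2 hc, ?_⟩
  intro v hv0 hvj
  obtain ⟨⟨hb11, hb12⟩, -, -⟩ := S_bounds hS1
  obtain ⟨⟨hb21, hb22⟩, -, -⟩ := S_bounds hS2
  -- find the row of v
  have hvn : v ≤ (n:ℝ) := le_trans hvj (by exact_mod_cast hj2)
  obtain ⟨l, hl1, hl2, hcl1, hcl2⟩ :
      ∃ l : ℕ, 1 ≤ l ∧ l ≤ n ∧ (l:ℝ) - 1 ≤ v ∧ v ≤ l := by
    rcases lt_or_ge v (n:ℝ) with hlt | hge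
    · refine ⟨⌊v⌋.toNat + 1, by omega, ?_, ?_, ?_⟩
      · have h0 : 0 ≤ ⌊v⌋ := Int.floor_nonneg.mpr hv0
        have : (⌊v⌋ : ℝ) < n := lt_of_le_of_lt (Int.floor_le _) hlt
        have : ⌊v⌋ < (n:ℤ) := by exact_mod_cast this
        omega
      · have h0 : 0 ≤ ⌊v⌋ := Int.floor_nonneg.mpr hv0
        have hcast : ((⌊v⌋.toNat : ℕ) : ℝ) = ((⌊v⌋ : ℤ) : ℝ) := by
          exact_mod_cast Int.toNat_of_nonneg h0
        push_cast
        rw [hcast]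
        linarith [Int.floor_le v]
      · have h0 : 0 ≤ ⌊v⌋ := Int.floor_nonneg.mpr hv0
        have hcast : ((⌊v⌋.toNat : ℕ) : ℝ) = ((⌊v⌋ : ℤ) : ℝ) := by
          exact_mod_cast Int.toNat_of_nonneg h0
        push_cast
        rw [hcast]
        linarith [Int.lt_floor_add_one v]
    · have hpe : v = (n:ℝ) := le_antisymm hvn hge
      exact ⟨n, hn, le_rfl, by rw [hpe]; linarith, by rw [hpe]⟩
  exact between_horiz m n x y ε hx hi1 hi2 hl1 hl2 hb11 hb22 hcl1 hcl2
    (hcol1 v hv0 hvj) (hcol2 v hv0 hvj) hc.1 hc.2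

lemma VS_diag (hi1 : 1 ≤ i) (hi2 : i ≤ 2*m) (hj1 : 1 ≤ j)
    {u : ℝ} (hu : u ∈ VSset m n x y ε i j) :
    rDown m (Dfree m n x y ε) (u, (j:ℝ)) = u := by
  obtain ⟨hS, hcol⟩ := hu
  obtain ⟨⟨hb1, hb2⟩, hD, -⟩ := S_bounds hS
  have hjpos : (0:ℝ) < j := by exact_mod_cast hj1
  have hreach : Reach (Dfree m n x y ε) (u, (j:ℝ)) (u, (0:ℝ)) := by
    refine ⟨{u} ×ˢ Icc (0:ℝ) (j:ℝ), ⟨?_, ?_, ?_⟩, ?_, ?_⟩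
    · rintro ⟨a, b⟩ ⟨ha, hb⟩
      simp only [mem_singleton_iff] at ha
      subst ha
      exact hcol b hb.1 hb.2
    · refine ⟨⟨(u, 0), rfl, by constructor <;> [skip; exact hjpos.le] <;> rfl⟩, ?_⟩
      exact ((convex_singleton _).prod (convex_Icc _ _)).isPreconnected
    · rintro p ⟨hp1, -⟩ q ⟨hq1, -⟩
      simp only [mem_singleton_iff] at hp1 hq1
      rw [hp1, hq1, sub_self, zero_mul]
    · exact ⟨rfl, ⟨hjpos.le, le_rfl⟩⟩
    · exact ⟨rfl, ⟨le_rfl, hjpos.le⟩⟩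
  rw [rDown, if_neg (by simp only; positivity)]
  apply IsGreatest.csSup_eq
  constructor
  · refine ⟨⟨?_, ?_⟩, hreach⟩
    · have : (1:ℝ) ≤ i := by exact_mod_cast hi1
      linarith
    · have : (i:ℝ) ≤ 2*m := by exact_mod_cast hi2
      linarith
  · rintro w ⟨-, hwr⟩
    exact w_le_u hj1 hwr

end Frame

end Stmt18Aux
namespace Stmt18Aux

variable {k : ℕ}

section MainLemma

variable {m n : ℕ} {x y : ℕ → EuclideanSpace ℝ (Fin k)} {ε : ℝ} {i j : ℕ}

set_option maxHeartbeats 1000000 in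
lemma main_lemma (hx : x m = x 0) (hm : 1 ≤ m) (hn : 1 ≤ n)
    (hi1 : 1 ≤ i) (hi2 : i ≤ 2*m) (hj1 : 1 ≤ j) (hj2 : j ≤ n)
    {u' u'' : ℝ} (h1 : u' ∈ Sset m n x y ε i j) (h2 : u'' ∈ Sset m n x y ε i j)
    (hle : u' ≤ u'')
    (Hσ : ∀ l : ℕ, l < j →
      (∃ s, (i:ℝ) - 1 ≤ s ∧ s ≤ u'' ∧ (s, (l:ℝ)) ∈ Dfree m n x y ε) →
      (∃ s, (i:ℝ) - 1 ≤ s ∧ s ≤ u' ∧ (s, (l:ℝ)) ∈ Dfree m n x y ε))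
    (HV : ∀ v, v ∈ VSset m n x y ε i j → ¬(u' < v ∧ v ≤ u'')) :
    Rset m n x y ε j u'' ⊆ Rset m n x y ε j u' := by
  rintro w ⟨⟨hw0, hw2m⟩, hwr⟩
  refine ⟨⟨hw0, hw2m⟩, ?_⟩
  obtain ⟨⟨hb11, hb12⟩, hD1, -⟩ := S_bounds h1
  obtain ⟨⟨hb21, hb22⟩, hD2, -⟩ := S_bounds h2
  have hjpos : (0:ℝ) < j := by exact_mod_cast hj1
  have hjn : (j:ℝ) ≤ n := by exact_mod_cast hj2
  have hwle'' : w ≤ u'' := w_le_u hj1 hwr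
  obtain ⟨γ, ⟨hsub, hconn, hmono⟩, hu''γ, hwγ⟩ := hwr
  set γ₁ : Set (ℝ × ℝ) := {p ∈ γ | p.1 + p.2 ∈ Iic (u'' + (j:ℝ))} with hγ₁def
  have hγ₁conn : IsConnected γ₁ :=
    trunc_conn hconn hmono _ ordConnected_Iic ⟨(u'', (j:ℝ)), hu''γ, by simp [mem_Iic]⟩
  have hγ₁mono : ∀ p ∈ γ₁, ∀ q ∈ γ₁, (p.1 - q.1) * (p.2 - q.2) ≥ 0 :=
    fun p hp q hq => hmono p hp.1 q hq.1
  have hγ₁sub : γ₁ ⊆ Dfree m n x y ε := fun p hp => hsub hp.1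
  have hu''γ₁ : (u'', (j:ℝ)) ∈ γ₁ := ⟨hu''γ, by simp [mem_Iic]⟩
  have hwγ₁ : (w, (0:ℝ)) ∈ γ₁ := ⟨hwγ, by simp only [mem_Iic]; linarith⟩
  have hγ₁le : ∀ p ∈ γ₁, p.1 ≤ u'' ∧ p.2 ≤ (j:ℝ) := by
    intro p hp
    have := coord_le hγ₁mono hp hu''γ₁ (by simpa using hp.2)
    simpa using this
  have hγ₁pos : ∀ p ∈ γ₁, 0 ≤ p.1 ∧ 0 ≤ p.2 := by
    intro p hp
    have := (Dfree_sub_full m n x y ε) (hγ₁sub hp)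
    exact ⟨this.1.1, this.2.1⟩
  -- the central splice construction
  have key : ∀ ub : ℝ, (i:ℝ) - 1 ≤ ub → ub ≤ (i:ℝ) → u' ≤ ub → w ≤ ub → ub ≤ u'' →
      (ub, (j:ℝ)) ∈ Dfree m n x y ε →
      Reach (Dfree m n x y ε) (ub, (j:ℝ)) (w, (0:ℝ)) := by
    intro ub hub1 hub2 hu'ub hwub hubu'' hubD
    -- find a point of γ₁ on the column of ub
    have himg : IsPreconnected ((fun p : ℝ × ℝ => p.1) '' γ₁) :=
      hγ₁conn.isPreconnected.image _ continuous_fst.continuousOn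
    rw [isPreconnected_iff_ordConnected] at himg
    have hmemw : w ∈ (fun p : ℝ × ℝ => p.1) '' γ₁ := ⟨(w, (0:ℝ)), hwγ₁, rfl⟩
    have hmemu'' : u'' ∈ (fun p : ℝ × ℝ => p.1) '' γ₁ := ⟨(u'', (j:ℝ)), hu''γ₁, rfl⟩
    obtain ⟨z₀, hz₀γ, hz₀1x⟩ := himg.out hmemw hmemu'' ⟨hwub, hubu''⟩
    have hz₀1 : z₀.1 = ub := hz₀1x
    set h₂ : ℝ := z₀.2 with hh₂def
    have hz₀pair : z₀ = (ub, h₂) := Prod.ext hz₀1 rfl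
    have hh₂j : h₂ ≤ (j:ℝ) := (hγ₁le z₀ hz₀γ).2
    have hh₂0 : 0 ≤ h₂ := (hγ₁pos z₀ hz₀γ).2
    -- free points of the column at integer heights
    have keyfree : ∀ l : ℕ, h₂ ≤ (l:ℝ) → l ≤ j → (ub, (l:ℝ)) ∈ Dfree m n x y ε := by
      intro l hl₂ hlj
      rcases eq_or_lt_of_le hlj with rfl | hlln
      · exact hubD
      · rcases eq_or_lt_of_le hl₂ with heq | hlt
        · have : z₀ = (ub, (l:ℝ)) := Prod.ext hz₀1 (hh₂def.symm.trans heq)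
          rw [← this]
          exact hγ₁sub hz₀γ
        · -- crossing of the line v = l
          have himg2 : IsPreconnected ((fun p : ℝ × ℝ => p.2) '' γ₁) :=
            hγ₁conn.isPreconnected.image _ continuous_snd.continuousOn
          rw [isPreconnected_iff_ordConnected] at himg2
          have hmem0 : (0:ℝ) ∈ (fun p : ℝ × ℝ => p.2) '' γ₁ := ⟨(w, (0:ℝ)), hwγ₁, rfl⟩
          have hmemj : (j:ℝ) ∈ (fun p : ℝ × ℝ => p.2) '' γ₁ := ⟨(u'', (j:ℝ)), hu''γ₁, rfl⟩
          obtain ⟨pl, hplγ, hpl2x⟩ := himg2.out hmem0 hmemj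
            (show (l:ℝ) ∈ Icc (0:ℝ) (j:ℝ) from
              ⟨by exact_mod_cast Nat.zero_le l, by exact_mod_cast hlln.le⟩)
          have hpl2 : pl.2 = (l:ℝ) := hpl2x
          have hpl1 : ub ≤ pl.1 := by
            have hmm := hγ₁mono pl hplγ z₀ hz₀γ
            rw [hpl2, hz₀1] at hmm
            have hlt' : z₀.2 < (l:ℝ) := by rw [← hh₂def]; exact hlt
            nlinarith [hmm, hlt']
          have hpl1'' : pl.1 ≤ u'' := (hγ₁le pl hplγ).1
          have hplD : (pl.1, (l:ℝ)) ∈ Dfree m n x y ε := by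
            have : pl = (pl.1, (l:ℝ)) := Prod.ext rfl hpl2
            rw [← this]
            exact hγ₁sub hplγ
          obtain ⟨s₀, hs₀1, hs₀2, hs₀D⟩ := Hσ l hlln
            ⟨pl.1, le_trans hub1 hpl1, hpl1'', hplD⟩
          have hl1n : l + 1 ≤ n := by omega
          have hcast : ((l+1 : ℕ):ℝ) - 1 = (l:ℝ) := by push_cast; ring
          exact between_horiz m n x y ε hx hi1 hi2 (by omega) hl1n
            hs₀1 (le_trans hpl1'' hb22) (le_of_eq hcast) (by push_cast; linarith)
            hs₀D hplD (le_trans hs₀2 hu'ub) hpl1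
    -- free vertical segment from h₂ up to j
    set lb : ℕ := max 1 ⌈h₂⌉₊ with hlbdef
    have hlb1 : 1 ≤ lb := le_max_left _ _
    have hlbh : h₂ ≤ (lb:ℝ) := by
      refine le_trans (Nat.le_ceil h₂) ?_
      exact_mod_cast le_max_right _ _
    have hlbl : (lb:ℝ) - 1 ≤ h₂ := by
      by_cases hc : ⌈h₂⌉₊ ≤ 1
      · have : lb = 1 := by omega
        rw [this]; push_cast; linarith
      · have : lb = ⌈h₂⌉₊ := by omega
        rw [this]
        have := Nat.ceil_lt_add_one hh₂0
        linarith
    have hlbj : lb ≤ j := by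
      have h1' : ⌈h₂⌉₊ ≤ j := Nat.ceil_le.mpr hh₂j
      omega
    have vertfree : ∀ v, h₂ ≤ v → v ≤ (j:ℝ) → (ub, v) ∈ Dfree m n x y ε := by
      intro v hv1 hv2
      by_cases hvlb : v ≤ (lb:ℝ)
      · refine between_vert m n x y ε hx hi1 hi2 hlb1 (le_trans hlbj hj2) hub1 hub2
          hlbl le_rfl ?_ (keyfree lb hlbh hlbj) hv1 hvlb
        rw [← hz₀pair]
        exact hγ₁sub hz₀γ
      · push_neg at hvlb
        set lv : ℕ := ⌈v⌉₊ with hlvdef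
        have hv0 : 0 ≤ v := le_trans hh₂0 hv1
        have hlv2 : v ≤ (lv:ℝ) := Nat.le_ceil v
        have hlvlb : lb + 1 ≤ lv := by
          have : (lb:ℝ) < lv := lt_of_lt_of_le hvlb hlv2
          have : lb < lv := by exact_mod_cast this
          omega
        have hlvj : lv ≤ j := Nat.ceil_le.mpr hv2
        have hlv1 : (lv:ℝ) - 1 ≤ v := by
          have := Nat.ceil_lt_add_one hv0
          linarith
        have hcast : ((lv - 1 : ℕ):ℝ) = (lv:ℝ) - 1 := by
          have : 1 ≤ lv := by omega
          push_cast [Nat.cast_sub this]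
          ring
        have hlbrel : h₂ ≤ ((lv - 1 : ℕ):ℝ) := by
          rw [hcast]
          have : ((lb:ℕ):ℝ) + 1 ≤ (lv:ℝ) := by exact_mod_cast hlvlb
          linarith [hlbh]
        have haD : (ub, (lv:ℝ) - 1) ∈ Dfree m n x y ε := by
          have h' := keyfree (lv - 1) hlbrel (by omega)
          rwa [hcast] at h'
        have hbD : (ub, (lv:ℝ)) ∈ Dfree m n x y ε :=
          keyfree lv (le_trans hlbh (by exact_mod_cast (by omega : lb ≤ lv))) hlvj
        exact between_vert m n x y ε hx hi1 hi2 (by omega : 1 ≤ lv) (le_trans hlvj hj2)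
          hub1 hub2 le_rfl le_rfl haD hbD hlv1 hlv2
    -- assemble the path
    set γ₂ : Set (ℝ × ℝ) := {p ∈ γ₁ | p.1 + p.2 ∈ Iic (ub + h₂)} with hγ₂def
    have hz₀γ₂ : z₀ ∈ γ₂ := ⟨hz₀γ, by simp only [mem_Iic]; rw [hz₀1]⟩
    have hγ₂conn : IsConnected γ₂ :=
      trunc_conn hγ₁conn hγ₁mono _ ordConnected_Iic ⟨z₀, hz₀γ₂⟩
    have hγ₂le : ∀ p ∈ γ₂, p.1 ≤ ub ∧ p.2 ≤ h₂ := by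
      rintro p ⟨hpγ, hpφ⟩
      have hφ : p.1 + p.2 ≤ z₀.1 + z₀.2 := by
        rw [hz₀1, ← hh₂def]
        simpa using hpφ
      have hc := coord_le hγ₁mono hpγ hz₀γ hφ
      rw [hz₀1] at hc
      exact ⟨hc.1, hc.2⟩
    set Vseg : Set (ℝ × ℝ) := {ub} ×ˢ Icc h₂ (j:ℝ) with hVdef
    have hVsub : Vseg ⊆ Dfree m n x y ε := by
      rintro ⟨a, b⟩ ⟨ha, hb⟩
      simp only [mem_singleton_iff] at ha
      subst ha
      exact vertfree b hb.1 hb.2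
    have hz₀V : z₀ ∈ Vseg := by
      rw [hz₀pair]
      exact ⟨rfl, ⟨le_rfl, hh₂j⟩⟩
    refine ⟨γ₂ ∪ Vseg, ⟨?_, ?_, ?_⟩, ?_, ?_⟩
    · exact union_subset (fun p hp => hγ₁sub hp.1) hVsub
    · refine IsConnected.union ⟨z₀, hz₀γ₂, hz₀V⟩ hγ₂conn ?_
      refine ⟨⟨z₀, hz₀V⟩, ?_⟩
      exact ((convex_singleton _).prod (convex_Icc _ _)).isPreconnected
    · rintro p (hp2 | hpV) q (hq2 | hqV)
      · exact hγ₁mono p hp2.1 q hq2.1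
      · obtain ⟨hA, hB⟩ := hγ₂le p hp2
        obtain ⟨hq1, hq2'⟩ := hqV
        simp only [mem_singleton_iff] at hq1
        have e1 : p.1 - q.1 ≤ 0 := by rw [hq1]; linarith
        have e2 : p.2 - q.2 ≤ 0 := by linarith [hq2'.1]
        nlinarith
      · obtain ⟨hA, hB⟩ := hγ₂le q hq2
        obtain ⟨hp1, hp2'⟩ := hpV
        simp only [mem_singleton_iff] at hp1
        have e1 : q.1 - p.1 ≤ 0 := by rw [hp1]; linarith
        have e2 : q.2 - p.2 ≤ 0 := by linarith [hp2'.1]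
        nlinarith
      · obtain ⟨hp1, -⟩ := hpV
        obtain ⟨hq1, -⟩ := hqV
        simp only [mem_singleton_iff] at hp1 hq1
        rw [hp1, hq1, sub_self, zero_mul]
    · exact Or.inr ⟨rfl, ⟨hh₂j, le_rfl⟩⟩
    · exact Or.inl ⟨hwγ₁, by simp only [mem_Iic]; linarith⟩
  -- now the two cases
  rcases le_or_gt w u' with hwu' | hwu'
  · exact key u' hb11 hb12 le_rfl hwu' hle hD1
  · exfalso
    have hwD : (w, (j:ℝ)) ∈ Dfree m n x y ε :=
      lineJ_free hx hi1 hi2 hj1 hj2 h1 h2 hwu'.le hwle''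
    have hreachw : Reach (Dfree m n x y ε) (w, (j:ℝ)) (w, (0:ℝ)) :=
      key w (le_trans hb11 hwu'.le) (le_trans hwle'' hb22) hwu'.le le_rfl hwle'' hwD
    have hcol : colFree m n x y ε j w := fun v hv1 hv2 =>
      squeeze m n x y ε hx hm hn hjpos hreachw v hv1 hv2
    have hwVS : w ∈ VSset m n x y ε i j := by
      refine ⟨S_mem_of (le_trans hb11 hwu'.le) (le_trans hwle'' hb22) hwD
        ⟨(w, (0:ℝ)), ⟨⟨hw0, hw2m⟩, rfl⟩, hreachw⟩, hcol⟩
    exact HV w hwVS ⟨hwu', hwle''⟩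

end MainLemma

end Stmt18Aux
namespace Stmt18Aux

variable {k : ℕ}

section Frame2

variable {m n : ℕ} {x y : ℕ → EuclideanSpace ℝ (Fin k)} {ε : ℝ} {i j : ℕ}

lemma colFree_of_integer (hx : x m = x 0) (hi1 : 1 ≤ i) (hi2 : i ≤ 2*m)
    (hj1 : 1 ≤ j) (hj2 : j ≤ n) {u : ℝ} (hu1 : (i:ℝ) - 1 ≤ u) (hu2 : u ≤ i)
    (h : ∀ l : ℕ, l ≤ j → (u, (l:ℝ)) ∈ Dfree m n x y ε) :
    colFree m n x y ε j u := by
  intro v hv0 hvj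
  set l : ℕ := max 1 ⌈v⌉₊ with hldef
  have hl1 : 1 ≤ l := le_max_left _ _
  have hlj : l ≤ j := by
    have : ⌈v⌉₊ ≤ j := Nat.ceil_le.mpr hvj
    omega
  have hvl : v ≤ (l:ℝ) := by
    refine le_trans (Nat.le_ceil v) ?_
    exact_mod_cast le_max_right _ _
  have hlv : (l:ℝ) - 1 ≤ v := by
    by_cases hc : ⌈v⌉₊ ≤ 1
    · have : l = 1 := by omega
      rw [this]; push_cast; linarith
    · have : l = ⌈v⌉₊ := by omega
      rw [this]
      have := Nat.ceil_lt_add_one hv0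
      linarith
  have hcast : ((l - 1 : ℕ):ℝ) = (l:ℝ) - 1 := by
    push_cast [Nat.cast_sub hl1]
    ring
  have haD : (u, (l:ℝ) - 1) ∈ Dfree m n x y ε := by
    have h' := h (l - 1) (by omega)
    rwa [hcast] at h'
  exact between_vert m n x y ε hx hi1 hi2 hl1 (le_trans hlj hj2) hu1 hu2
    le_rfl le_rfl haD (h l hlj) hlv hvl

/-- if the column of `v ∈ VS` is "σ-visible" from `u1 ≤ v`, then `u1` is diagonal too. -/
lemma claimU (hx : x m = x 0) (hi1 : 1 ≤ i) (hi2 : i ≤ 2*m)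
    (hj1 : 1 ≤ j) (hj2 : j ≤ n) {u1 v : ℝ}
    (hu1 : u1 ∈ Sset m n x y ε i j) (hv : v ∈ VSset m n x y ε i j) (hle : u1 ≤ v)
    (hσ : ∀ l : ℕ, l < j →
      (∃ s, (i:ℝ) - 1 ≤ s ∧ s ≤ v ∧ (s, (l:ℝ)) ∈ Dfree m n x y ε) →
      (∃ s, (i:ℝ) - 1 ≤ s ∧ s ≤ u1 ∧ (s, (l:ℝ)) ∈ Dfree m n x y ε)) :
    u1 ∈ VSset m n x y ε i j := by
  obtain ⟨hvS, hvcol⟩ := hv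
  obtain ⟨⟨hb11, hb12⟩, hD1, -⟩ := S_bounds hu1
  obtain ⟨⟨hb21, hb22⟩, -, -⟩ := S_bounds hvS
  refine ⟨hu1, colFree_of_integer hx hi1 hi2 hj1 hj2 hb11 hb12 ?_⟩
  intro l hlj
  rcases eq_or_lt_of_le hlj with rfl | hlln
  · exact hD1
  · have hvl : (v, (l:ℝ)) ∈ Dfree m n x y ε := by
      apply hvcol
      · exact_mod_cast Nat.zero_le l
      · exact_mod_cast hlln.le
    obtain ⟨s₀, hs₀1, hs₀2, hs₀D⟩ := hσ l hlln ⟨v, le_trans hb11 hle, le_rfl, hvl⟩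
    have hl1n : l + 1 ≤ n := by omega
    have hcast : ((l+1 : ℕ):ℝ) - 1 = (l:ℝ) := by push_cast; ring
    exact between_horiz m n x y ε hx hi1 hi2 (by omega) hl1n
      hs₀1 hb22 (le_of_eq hcast) (by push_cast; linarith)
      hs₀D hvl hs₀2 hle

end Frame2

end Stmt18Aux
open Stmt18Aux in
set_option maxHeartbeats 1000000 in
theorem stmt18
    (k m n : ℕ) (hk : 1 ≤ k) (hm : 1 ≤ m) (hn : 1 ≤ n)
    (x y : ℕ → EuclideanSpace ℝ (Fin k)) (hx : x m = x 0) (hy : y n = y 0)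
    (ε : ℝ) (hε : 0 ≤ ε)
    (Dε : Set (ℝ × ℝ)) (hDε : Dε = Dfree m n x y ε)
    (i j : ℕ) (hi1 : 1 ≤ i) (hi2 : i ≤ 2*m) (hj1 : 1 ≤ j) (hj2 : j ≤ n) :
    ∃ I : Finset (Set ℝ),
      (∀ s ∈ I, s.OrdConnected) ∧
      (I : Set (Set ℝ)).PairwiseDisjoint id ∧
      ⋃₀ (I : Set (Set ℝ)) = {u : ℝ | (u, (j:ℝ)) ∈ gDown m Dε ∩ cellT i j} ∧
      (∃ I' ⊆ I, I'.card ≤ 1 ∧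
        (∀ s ∈ I', ∀ u ∈ s, rDown m Dε (u, (j:ℝ)) = u) ∧
        (∀ s ∈ I, s ∉ I' → ∃ c : ℝ, ∀ u ∈ s, rDown m Dε (u, (j:ℝ)) = c)) ∧
      I.card ≤ 2*n + 1 := by
  classical
  subst hDε
  set S : Set ℝ := Sset m n x y ε i j with hSdef
  set VS : Set ℝ := VSset m n x y ε i j with hVSdef
  have hjne : ((j:ℝ)) ≠ 0 := Nat.cast_ne_zero.mpr (by omega)
  set sg : ℝ → Finset ℕ := fun u => (Finset.range j).filter
    (fun l => ∃ s, (i:ℝ) - 1 ≤ s ∧ s ≤ u ∧ (s, (l:ℝ)) ∈ Dfree m n x y ε) with hsgdef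
  have sg_mono : ∀ u u' : ℝ, u ≤ u' → sg u ⊆ sg u' := by
    intro u u' h l hl
    simp only [hsgdef, Finset.mem_filter] at hl ⊢
    obtain ⟨hr, s, h1, h2, h3⟩ := hl
    exact ⟨hr, s, h1, le_trans h2 h, h3⟩
  set fib : ℕ → Set ℝ := fun c => {u : ℝ | u ∈ S ∧ u ∉ VS ∧ (sg u).card = c} with hfibdef
  set I : Finset (Set ℝ) := insert VS ((Finset.range (j+1)).image fib) with hIdef
  -- σ-equality within a fiber
  have sg_eq : ∀ c : ℕ, ∀ a ∈ fib c, ∀ b ∈ fib c, a ≤ b → sg a = sg b := by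
    intro c a ha b hb hab
    obtain ⟨-, -, hca⟩ := ha
    obtain ⟨-, -, hcb⟩ := hb
    exact Finset.eq_of_subset_of_card_le (sg_mono a b hab) (by rw [hca, hcb])
  have sg_to_Hσ : ∀ a b : ℝ, a ≤ b → sg a = sg b →
      (∀ l : ℕ, l < j →
        (∃ s, (i:ℝ) - 1 ≤ s ∧ s ≤ b ∧ (s, (l:ℝ)) ∈ Dfree m n x y ε) →
        (∃ s, (i:ℝ) - 1 ≤ s ∧ s ≤ a ∧ (s, (l:ℝ)) ∈ Dfree m n x y ε)) := by
    intro a b hab hsg l hl hex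
    have hmem : l ∈ sg b := by
      simp only [hsgdef, Finset.mem_filter, Finset.mem_range]
      exact ⟨hl, hex⟩
    rw [← hsg] at hmem
    simp only [hsgdef, Finset.mem_filter, Finset.mem_range] at hmem
    exact hmem.2
  -- no VS-point strictly between two points of a fiber
  have no_straddle : ∀ c : ℕ, ∀ a ∈ fib c, ∀ b ∈ fib c, a ≤ b →
      ∀ v ∈ VS, ¬(a < v ∧ v ≤ b) := by
    rintro c a ha b hb hab v hv ⟨hav, hvb⟩
    have haS := ha.1
    apply ha.2.1
    rw [hVSdef]
    refine claimU hx hi1 hi2 hj1 hj2 haS hv hav.le ?_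
    refine sg_to_Hσ a v hav.le ?_
    apply Finset.Subset.antisymm (sg_mono a v hav.le)
    calc sg v ⊆ sg b := sg_mono v b hvb
      _ = sg a := (sg_eq c a ha b hb hab).symm
  -- constancy of rDown on fibers
  have hconst : ∀ c : ℕ, ∀ a ∈ fib c, ∀ b ∈ fib c,
      rDown m (Dfree m n x y ε) (a, (j:ℝ)) = rDown m (Dfree m n x y ε) (b, (j:ℝ)) := by
    have base : ∀ c : ℕ, ∀ a ∈ fib c, ∀ b ∈ fib c, a ≤ b →
        rDown m (Dfree m n x y ε) (a, (j:ℝ)) = rDown m (Dfree m n x y ε) (b, (j:ℝ)) := by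
      intro c a ha b hb hab
      have haS := ha.1
      have hbS := hb.1
      have hset : Rset m n x y ε j a = Rset m n x y ε j b := by
        apply Set.Subset.antisymm
        · exact mono_R hx hi1 hi2 hj1 hj2 haS hbS hab
        · exact main_lemma hx hm hn hi1 hi2 hj1 hj2 haS hbS hab
            (sg_to_Hσ a b hab (sg_eq c a ha b hb hab))
            (fun v hv => no_straddle c a ha b hb hab v hv)
      rw [rDown, rDown, if_neg (show ¬((a, (j:ℝ)).2 = 0) from hjne),
        if_neg (show ¬((b, (j:ℝ)).2 = 0) from hjne)]
      exact congrArg sSup hset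
    intro c a ha b hb
    rcases le_total a b with h | h
    · exact base c a ha b hb h
    · exact (base c b hb a ha h).symm
  refine ⟨I, ?_, ?_, ?_, ?_, ?_⟩
  · -- OrdConnected
    intro s hs
    rw [hIdef, Finset.mem_insert] at hs
    rcases hs with rfl | hs
    · exact VS_ordconn hx hm hn hi1 hi2 hj1 hj2
    · obtain ⟨c, -, rfl⟩ := Finset.mem_image.mp hs
      rw [Set.ordConnected_iff]
      rintro a ha b hb hab z ⟨hza, hzb⟩
      obtain ⟨haS, haVS, hca⟩ := ha
      obtain ⟨hbS, hbVS, hcb⟩ := hb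
      have hzS : z ∈ S := (S_ordconn hx hi1 hi2 hj1 hj2).out haS hbS ⟨hza, hzb⟩
      have hsgz : sg z = sg a := by
        apply Finset.Subset.antisymm
        · calc sg z ⊆ sg b := sg_mono z b hzb
            _ = sg a := (sg_eq c a ⟨haS, haVS, hca⟩ b ⟨hbS, hbVS, hcb⟩ hab).symm
        · exact sg_mono a z hza
      have hzVS : z ∉ VS := by
        intro hzv
        apply haVS
        have haz : a ≤ z := hza
        rw [hVSdef]
        exact claimU hx hi1 hi2 hj1 hj2 haS hzv haz (sg_to_Hσ a z haz hsgz.symm)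
      exact ⟨hzS, hzVS, by rw [hsgz, hca]⟩
  · -- pairwise disjoint
    intro a ha b hb hne
    simp only [Finset.coe_insert, Set.mem_insert_iff, Finset.coe_image, Set.mem_image,
      Finset.mem_coe, hIdef] at ha hb
    have hdisj : ∀ t : Set ℝ, ∀ c : ℕ, t = VS → Disjoint t (fib c) := by
      rintro t c rfl
      rw [Set.disjoint_left]
      rintro u hu ⟨-, hu2, -⟩
      exact hu2 hu
    rcases ha with rfl | ⟨c1, -, rfl⟩ <;> rcases hb with rfl | ⟨c2, -, rfl⟩
    · exact absurd rfl hne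
    · exact (hdisj _ c2 rfl)
    · exact (hdisj _ c1 rfl).symm
    · refine Set.disjoint_left.mpr ?_
      rintro u ⟨-, -, h1⟩ ⟨-, -, h2⟩
      exact hne (by rw [hfibdef]; rw [← h1, h2])
  · -- union
    ext u
    simp only [Set.mem_sUnion, Finset.mem_coe, hIdef, Finset.mem_insert, Finset.mem_image]
    constructor
    · rintro ⟨t, (rfl | ⟨c, -, rfl⟩), hu⟩
      · exact hu.1
      · exact hu.1
    · intro hu
      by_cases hv : u ∈ VS
      · exact ⟨VS, Or.inl rfl, hv⟩
      · refine ⟨fib ((sg u).card), Or.inr ⟨(sg u).card, ?_, rfl⟩, ⟨hu, hv, rfl⟩⟩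
        rw [Finset.mem_range]
        have hsub : sg u ⊆ Finset.range j := by
          rw [hsgdef]; exact Finset.filter_subset _ _
        have hle' : (sg u).card ≤ j := by
          have h' := Finset.card_le_card hsub
          simpa using h'
        omega
  · -- the special interval
    refine ⟨{VS}, ?_, ?_, ?_, ?_⟩
    · rw [hIdef]
      exact Finset.singleton_subset_iff.mpr (Finset.mem_insert_self _ _)
    · exact Finset.card_singleton _ |>.le
    · intro s hs u hu
      rw [Finset.mem_singleton] at hs
      subst hs
      exact VS_diag hi1 hi2 hj1 hu
    · intro s hs hns
      rw [hIdef, Finset.mem_insert] at hs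
      rcases hs with rfl | hs
      · exact absurd (Finset.mem_singleton_self _) hns
      · obtain ⟨c, -, rfl⟩ := Finset.mem_image.mp hs
        rcases Set.eq_empty_or_nonempty (fib c) with he | ⟨u₀, hu₀⟩
        · exact ⟨0, fun u hu => absurd hu (by rw [he]; exact Set.notMem_empty u)⟩
        · exact ⟨rDown m (Dfree m n x y ε) (u₀, (j:ℝ)),
            fun u hu => hconst c u hu u₀ hu₀⟩
  · -- cardinality
    rw [hIdef]
    calc (insert VS ((Finset.range (j+1)).image fib)).card
        ≤ ((Finset.range (j+1)).image fib).card + 1 := Finset.card_insert_le _ _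
      _ ≤ (Finset.range (j+1)).card + 1 := by
          have := Finset.card_image_le (s := Finset.range (j+1)) (f := fib)
          omega
      _ = j + 2 := by rw [Finset.card_range]
      _ ≤ 2*n + 1 := by omega
end
end
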